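/- arXiv:2111.12387 — 4 statements merged into one kernel-verified Lean document; each statement's English description precedes it below -/
import Mathlib

section
/- Let D = (V, A) be a directed acyclic graph. The acyclic reorientation poset AR(D) is a distributive lattice (a lattice satisfying x ∨ (y ∧ z) = (x ∨ y) ∧ (x ∨ z) for all x, y, z) if and only if the underlying undirected graph of D is a forest (equivalently, in that case AR(D) is the boolean lattice of all subsets of A). -/
def ArcRel {V : Type*} (E : Set (V × V)) : V → V → Prop := fun x y => (x, y) ∈ E

/-- `E` has no directed cycle. -/
def AcyclicArcs {V : Type*} (E : Set (V × V)) : Prop :=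
  ∀ v : V, ¬ Relation.TransGen (ArcRel E) v v

/-- `A` is the arc set of a directed acyclic graph: arcs join distinct vertices,
at most one direction between two vertices, and no directed cycle. -/
def IsDAG {V : Type*} (A : Set (V × V)) : Prop :=
  (∀ a ∈ A, a.1 ≠ a.2) ∧ (∀ a ∈ A, Prod.swap a ∉ A) ∧ AcyclicArcs A

/-- Arc set of the reorientation of `A` where exactly the arcs of `B` are reversed. -/
def reorient {V : Type*} (A B : Set (V × V)) : Set (V × V) :=
  (A \ B) ∪ (Prod.swap '' B)

/-- `B` encodes an acyclic reorientation of `A`. -/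
def ARmem {V : Type*} (A B : Set (V × V)) : Prop :=
  B ⊆ A ∧ AcyclicArcs (reorient A B)

/-- The acyclic reorientation poset of `A`, ordered by inclusion of reversed sets. -/
abbrev ARP {V : Type*} (A : Set (V × V)) := {B : Set (V × V) // ARmem A B}

/-- Underlying undirected graph of an arc set. -/
def undirectedGraph {V : Type*} (E : Set (V × V)) : SimpleGraph V :=
  SimpleGraph.fromRel (fun x y => (x, y) ∈ E)

/-- A directed graph is a forest if its underlying undirected graph has no cycle. -/
def IsForestArcs {V : Type*} (E : Set (V × V)) : Prop :=
  (undirectedGraph E).IsAcyclic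


section Basic
variable {V : Type*} {A B : Set (V × V)}

lemma mem_reorient {p : V × V} :
    p ∈ reorient A B ↔ (p ∈ A ∧ p ∉ B) ∨ Prod.swap p ∈ B := by
  simp only [reorient, Set.mem_union, Set.mem_diff, Set.mem_image]
  constructor
  · rintro (h | ⟨q, hq, rfl⟩)
    · exact Or.inl h
    · right; simpa using hq
  · rintro (h | h)
    · exact Or.inl h
    · exact Or.inr ⟨p.swap, h, by simp⟩

lemma reorient_empty : reorient A (∅ : Set (V × V)) = A := by
  simp [reorient]

lemma reorient_ne (hA : IsDAG A) (hB : B ⊆ A) {p : V × V} (hp : p ∈ reorient A B) :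
    p.1 ≠ p.2 := by
  rcases mem_reorient.1 hp with h | h
  · exact hA.1 p h.1
  · have := hA.1 _ (hB h)
    simp only [Prod.fst_swap, Prod.snd_swap] at this
    exact this.symm

lemma no_two_cycle (hA : IsDAG A) (hB : B ⊆ A) {u v : V}
    (h1 : (u, v) ∈ reorient A B) (h2 : (v, u) ∈ reorient A B) : False := by
  rcases mem_reorient.1 h1 with ⟨ha1, hb1⟩ | hs1 <;>
    rcases mem_reorient.1 h2 with ⟨ha2, hb2⟩ | hs2
  · exact hA.2.1 _ ha1 ha2
  · exact hb1 (by simpa using hs2)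
  · exact hb2 (by simpa using hs1)
  · exact hA.2.1 _ (hB hs1) (by simpa using hB hs2)

lemma transGen_mono_rank {α : Type*} (f : α → ℕ) {r : α → α → Prop}
    (h : ∀ a b, r a b → f a < f b) {a b : α} (hab : Relation.TransGen r a b) :
    f a < f b := by
  induction hab with
  | single h1 => exact h _ _ h1
  | tail _ h2 ih => exact lt_trans ih (h _ _ h2)

lemma acyclicArcs_of_rank {E : Set (V × V)} (f : V → ℕ)
    (h : ∀ p ∈ E, f p.1 < f p.2) : AcyclicArcs E := by
  intro v hv
  exact lt_irrefl _ (transGen_mono_rank f (fun a b hr => h (a, b) hr) hv)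

lemma empty_ARmem (hA : IsDAG A) : ARmem A (∅ : Set (V × V)) :=
  ⟨Set.empty_subset _, by rw [reorient_empty]; exact hA.2.2⟩

lemma ARP.le_iff {x y : ARP A} : x ≤ y ↔ x.1 ⊆ y.1 := Iff.rfl

end Basic


section Chains
variable {V : Type*} {r : V → V → Prop}

lemma chain_dedup : ∀ (l : List V) (u : V), List.Chain r u l →
    ∃ l', List.Chain r u l' ∧ (u::l').getLast? = (u::l).getLast? ∧ (u::l').Nodup := by
  intro l
  induction l with
  | nil => exact fun u _ => ⟨[], List.Chain.nil, rfl, List.nodup_singleton u⟩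
  | cons a l1 ih =>
    intro u h
    rw [List.Chain, List.chain_cons] at h
    obtain ⟨hra, hch⟩ := h
    obtain ⟨l1', hch', hlast', hnd'⟩ := ih a hch
    by_cases hu : u ∈ a :: l1'
    · obtain ⟨s, t2, hst⟩ := List.append_of_mem hu
      have hchain2 : List.Chain r u t2 := by
        cases s with
        | nil =>
          simp only [List.nil_append] at hst
          obtain ⟨rfl, rfl⟩ : a = u ∧ l1' = t2 := by
            constructor <;> [exact (List.cons.injEq .. ▸ hst).1; exact (List.cons.injEq .. ▸ hst).2]
          exact hch'
        | cons a' s' =>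
          obtain ⟨rfl, hl1'⟩ : a = a' ∧ l1' = s' ++ u :: t2 := by
            constructor <;> [exact (List.cons.injEq .. ▸ hst).1; exact (List.cons.injEq .. ▸ hst).2]
          exact (List.isChain_cons_split.mp (hl1' ▸ hch')).2
      have hsub : List.Sublist (u::t2) (a::l1') := by
        rw [hst]; exact (List.suffix_append s (u::t2)).sublist
      have hnd2 : (u::t2).Nodup := hnd'.sublist hsub
      refine ⟨t2, hchain2, ?_, hnd2⟩
      have h1 : (u::t2).getLast? = (a::l1').getLast? := by
        rw [hst, List.getLast?_append]
        cases h2 : (u :: t2).getLast? with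
        | none => simp at h2
        | some w => simp [h2]
      rw [h1, hlast', List.getLast?_cons_cons]
    · refine ⟨a::l1', List.chain_cons.mpr ⟨hra, hch'⟩, ?_, List.nodup_cons.mpr ⟨hu, hnd'⟩⟩
      rw [List.getLast?_cons_cons, List.getLast?_cons_cons, hlast']

lemma exists_nodup_chain {u v : V} (h : Relation.ReflTransGen r u v) :
    ∃ l, List.Chain r u l ∧ (u::l).getLast? = some v ∧ (u::l).Nodup := by
  obtain ⟨l, hch, hlast⟩ := List.exists_isChain_cons_of_relationReflTransGen h
  obtain ⟨l', h1, h2, h3⟩ := chain_dedup l u hch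
  refine ⟨l', h1, ?_, h3⟩
  rw [h2, List.getLast?_eq_getLast (List.cons_ne_nil _ _), hlast]

lemma chain_iff_get {a : V} {l : List V} : List.Chain r a l ↔
    (∀ h : 0 < l.length, r a (l.get ⟨0, h⟩)) ∧
      ∀ (i : ℕ) (h : i < l.length - 1),
        r (l.get ⟨i, by omega⟩) (l.get ⟨i + 1, by omega⟩) := by
  cases l with
  | nil => simp [List.Chain]
  | cons b m =>
    simp only [List.Chain, List.isChain_iff_getElem, List.length_cons, List.get_eq_getElem]
    constructor
    · intro h
      exact ⟨fun _ => h 0 (by omega), fun i hi => h (i + 1) (by omega)⟩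
    · rintro ⟨h1, h2⟩ i hi
      cases i with
      | zero => exact h1 (by omega)
      | succ k => exact h2 k (by omega)

end Chains

section Lat
variable {V : Type*} {A : Set (V × V)}

noncomputable def arpLattice
    (h1 : ∀ x y : ARP A, ∃ z : ARP A, IsLUB {x, y} z)
    (h2 : ∀ x y : ARP A, ∃ z : ARP A, IsGLB {x, y} z) : Lattice (ARP A) :=
  { (inferInstance : PartialOrder (ARP A)) with
    sup := fun x y => (h1 x y).choose
    le_sup_left := fun x y => (h1 x y).choose_spec.1 (Set.mem_insert _ _)
    le_sup_right := fun x y => (h1 x y).choose_spec.1 (Set.mem_insert_of_mem _ rfl)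
    sup_le := fun x y z hx hy => (h1 x y).choose_spec.2
      (by rintro w (rfl | rfl) <;> assumption)
    inf := fun x y => (h2 x y).choose
    inf_le_left := fun x y => (h2 x y).choose_spec.1 (Set.mem_insert _ _)
    inf_le_right := fun x y => (h2 x y).choose_spec.1 (Set.mem_insert_of_mem _ rfl)
    le_inf := fun x y z hx hy => (h2 y z).choose_spec.2
      (by rintro w (rfl | rfl) <;> assumption) }

noncomputable def arpDistribLattice
    (h1 : ∀ x y : ARP A, ∃ z : ARP A, IsLUB {x, y} z)
    (h2 : ∀ x y : ARP A, ∃ z : ARP A, IsGLB {x, y} z)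
    (h3 : ∀ x y z yz xyz xy xz : ARP A,
        IsGLB {y, z} yz → IsLUB {x, yz} xyz →
        IsLUB {x, y} xy → IsLUB {x, z} xz → IsGLB {xy, xz} xyz) :
    DistribLattice (ARP A) :=
  { arpLattice h1 h2 with
    le_sup_inf := fun x y z =>
      (h3 x y z _ _ _ _ (h2 y z).choose_spec (h1 x (h2 y z).choose).choose_spec
        (h1 x y).choose_spec (h1 x z).choose_spec).2
        (h2 (h1 x y).choose (h1 x z).choose).choose_spec.1 }

end Lat

section Rank
variable {V : Type*} [Fintype V]

noncomputable def eF (v : V) : ℕ := ((Fintype.equivFin V) v : ℕ)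

lemma eF_lt (v : V) : eF v < Fintype.card V := ((Fintype.equivFin V) v).isLt

lemma eF_inj : Function.Injective (eF (V := V)) := by
  intro u v h
  have : (Fintype.equivFin V) u = (Fintype.equivFin V) v := Fin.ext h
  exact (Fintype.equivFin V).injective this

noncomputable def psiF (c : V → ℕ) (v : V) : ℕ := c v * Fintype.card V + eF v

lemma psiF_mono (c : V → ℕ) {u v : V} (h : c u < c v) : psiF c u < psiF c v := by
  have h1 := eF_lt u
  have h2 : (c u + 1) * Fintype.card V ≤ c v * Fintype.card V :=
    Nat.mul_le_mul_right _ h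
  unfold psiF
  nlinarith [Nat.zero_le (eF v)]

lemma psiF_lt_iff (c : V → ℕ) (u v : V) :
    psiF c u < psiF c v ↔ c u < c v ∨ (c u = c v ∧ eF u < eF v) := by
  constructor
  · intro hlt
    rcases lt_trichotomy (c u) (c v) with h | h | h
    · exact Or.inl h
    · refine Or.inr ⟨h, ?_⟩
      unfold psiF at hlt
      rw [h] at hlt
      omega
    · exact absurd (psiF_mono c h) (by omega)
  · rintro (h | ⟨h1, h2⟩)
    · exact psiF_mono c h
    · unfold psiF
      rw [h1]
      omega

lemma psiF_inj (c : V → ℕ) : Function.Injective (psiF c) := by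
  intro u v h
  rcases lt_trichotomy (c u) (c v) with hc | hc | hc
  · exact absurd (psiF_mono c hc) (by omega)
  · have : eF u = eF v := by unfold psiF at h; rw [hc] at h; omega
    exact eF_inj this
  · exact absurd (psiF_mono c hc) (by omega)

/-- the reorientation reversing exactly the arcs decreasing w.r.t. an injective rank is acyclic -/
lemma dis_acyclic {A : Set (V × V)} (hA : IsDAG A) (f : V → ℕ) (hf : Function.Injective f) :
    ARmem A {p ∈ A | f p.2 < f p.1} := by
  refine ⟨fun p hp => hp.1, acyclicArcs_of_rank f ?_⟩
  intro p hp
  rcases mem_reorient.1 hp with ⟨hpA, hpx⟩ | hs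
  · simp only [Set.mem_setOf_eq, not_and, not_lt] at hpx
    have h1 := hpx hpA
    have h2 : p.1 ≠ p.2 := hA.1 p hpA
    have h3 : f p.1 ≠ f p.2 := fun hh => h2 (hf hh)
    omega
  · exact hs.2

end Rank

section Shortcut
variable {V : Type*} [Fintype V] {A : Set (V × V)}

open Classical in
noncomputable def cxF (w : ℕ → V) (t : ℕ) : V → ℕ := fun v =>
  if v = w 1 then 0 else if v = w 0 then 1 else if v = w t then 2 else 3

open Classical in
noncomputable def cyF (w : ℕ → V) (t : ℕ) : V → ℕ := fun v =>
  if v = w 1 then 0 else if v = w t then 1 else if v = w 0 then 2 else 3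

open Classical in
noncomputable def czF (w : ℕ → V) (t : ℕ) : V → ℕ := fun v =>
  if h : ∃ i, i ≤ t ∧ w i = v then (if h.choose = 0 then 0 else t + 1 - h.choose) else t + 2

lemma czF_eval (w : ℕ → V) (t : ℕ)
    (hinj : ∀ i ≤ t, ∀ j ≤ t, w i = w j → i = j) {i : ℕ} (hi : i ≤ t) :
    czF w t (w i) = if i = 0 then 0 else t + 1 - i := by
  have hex : ∃ j, j ≤ t ∧ w j = w i := ⟨i, hi, rfl⟩
  rw [czF, dif_pos hex]
  have hspec := hex.choose_spec
  have : hex.choose = i := hinj _ hspec.1 _ hi hspec.2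
  rw [this]

/-- If all path arcs are reversed but the chord is not, there is a directed cycle. -/
lemma shortcut_force (hA : IsDAG A) (w : ℕ → V) (t : ℕ) (ht : 2 ≤ t)
    (hp : ∀ i < t, (w i, w (i + 1)) ∈ A) (hb : (w 0, w t) ∈ A)
    {T : Set (V × V)} (hTA : T ⊆ A) (hPT : ∀ i < t, (w i, w (i + 1)) ∈ T)
    (hbT : (w 0, w t) ∉ T) : ¬ AcyclicArcs (reorient A T) := by
  intro hac
  apply hac (w 0)
  have hstep : ∀ i < t, ArcRel (reorient A T) (w (i + 1)) (w i) := by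
    intro i hi
    exact mem_reorient.2 (Or.inr (by simpa using hPT i hi))
  have claim : ∀ i, 1 ≤ i → i ≤ t → Relation.TransGen (ArcRel (reorient A T)) (w i) (w 0) := by
    intro i
    induction i with
    | zero => omega
    | succ n ih =>
      intro _ hle
      rcases Nat.eq_zero_or_pos n with rfl | hn
      · exact Relation.TransGen.single (hstep 0 (by omega))
      · exact Relation.TransGen.head (hstep n (by omega)) (ih hn (by omega))
  have hb' : ArcRel (reorient A T) (w 0) (w t) :=
    mem_reorient.2 (Or.inl ⟨hb, hbT⟩)
  exact Relation.TransGen.head hb' (claim t (by omega) le_rfl)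

lemma caseI_false (hA : IsDAG A)
    (h1 : ∀ x y : ARP A, ∃ z : ARP A, IsLUB {x, y} z)
    (h2 : ∀ x y : ARP A, ∃ z : ARP A, IsGLB {x, y} z)
    (h3 : ∀ x y z yz xyz xy xz : ARP A,
        IsGLB {y, z} yz → IsLUB {x, yz} xyz →
        IsLUB {x, y} xy → IsLUB {x, z} xz → IsGLB {xy, xz} xyz)
    (w : ℕ → V) (t : ℕ) (ht : 2 ≤ t)
    (hinj : ∀ i ≤ t, ∀ j ≤ t, w i = w j → i = j)
    (hp : ∀ i < t, (w i, w (i + 1)) ∈ A)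
    (hb : (w 0, w t) ∈ A) : False := by
  classical
  -- distinctness
  have d01 : w 0 ≠ w 1 := fun h => by have := hinj 0 (by omega) 1 (by omega) h; omega
  have d0t : w 0 ≠ w t := fun h => by have := hinj 0 (by omega) t le_rfl h; omega
  have d1t : w 1 ≠ w t := fun h => by have := hinj 1 (by omega) t le_rfl h; omega
  set cx := cxF w t with hcx
  set cy := cyF w t with hcy
  set cz := czF w t with hcz
  -- the three acyclic reorientations
  set xS : Set (V × V) := {p ∈ A | psiF cx p.2 < psiF cx p.1} with hxS
  set yS : Set (V × V) := {p ∈ A | psiF cy p.2 < psiF cy p.1} with hyS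
  set zS : Set (V × V) := {p ∈ A | psiF cz p.2 < psiF cz p.1} with hzS
  have hxmem : ARmem A xS := dis_acyclic hA _ (psiF_inj cx)
  have hymem : ARmem A yS := dis_acyclic hA _ (psiF_inj cy)
  have hzmem : ARmem A zS := dis_acyclic hA _ (psiF_inj cz)
  -- membership computations
  have cx1 : cx (w 1) = 0 := by simp [hcx, cxF]
  have cx0 : cx (w 0) = 1 := by simp [hcx, cxF, d01]
  have cxt : cx (w t) = 2 := by simp [hcx, cxF, d1t.symm, d0t.symm]
  have cy1 : cy (w 1) = 0 := by simp [hcy, cyF]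
  have cy0 : cy (w 0) = 2 := by simp [hcy, cyF, d01, d0t]
  have cyt : cy (w t) = 1 := by simp [hcy, cyF, d1t.symm]
  have hp0x : (w 0, w 1) ∈ xS := by
    refine ⟨hp 0 (by omega), ?_⟩
    exact psiF_mono cx (by rw [cx1, cx0]; omega)
  have hbnx : ((w 0, w t) : V × V) ∉ xS := by
    intro hmem
    have h2 := hmem.2
    have := psiF_mono cx (u := w 0) (v := w t) (by rw [cx0, cxt]; omega)
    simp only at h2
    omega
  have hbny : ((w 0, w t) : V × V) ∈ yS := by
    refine ⟨hb, ?_⟩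
    exact psiF_mono cy (by rw [cyt, cy0]; omega)
  have hbnz : ((w 0, w t) : V × V) ∉ zS := by
    intro hmem
    have h2 := hmem.2
    have e0 : cz (w 0) = 0 := by rw [hcz, czF_eval w t hinj (by omega)]; simp
    have et : cz (w t) = 1 := by
      rw [hcz, czF_eval w t hinj le_rfl, if_neg (by omega : ¬ t = 0)]
      omega
    have := psiF_mono cz (u := w 0) (v := w t) (by rw [e0, et]; omega)
    simp only at h2
    omega
  have hpz : ∀ i, 1 ≤ i → i < t → (w i, w (i + 1)) ∈ zS := by
    intro i h1i hit
    refine ⟨hp i hit, ?_⟩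
    have ei : cz (w i) = t + 1 - i := by
      rw [hcz, czF_eval w t hinj (by omega)]
      have : ¬ (i = 0) := by omega
      simp [this]
    have ei1 : cz (w (i + 1)) = t + 1 - (i + 1) := by
      rw [hcz, czF_eval w t hinj (by omega)]
      have : ¬ (i + 1 = 0) := by omega
      simp [this]
    exact psiF_mono cz (by rw [ei, ei1]; omega)
  -- y = x ∪ {b}
  have hyx : yS = xS ∪ {((w 0, w t) : V × V)} := by
    have key : ∀ u v2 : V, u ≠ v2 → ¬(v2 = w 0 ∧ u = w t) → ¬(v2 = w t ∧ u = w 0) →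
        (psiF cx u < psiF cx v2 ↔ psiF cy u < psiF cy v2) := by
      intro u v2 huv hn1 hn2
      rw [psiF_lt_iff, psiF_lt_iff]
      by_cases hu1 : u = w 1 <;> by_cases hu0 : u = w 0 <;> by_cases hut : u = w t <;>
        by_cases hv1 : v2 = w 1 <;> by_cases hv0 : v2 = w 0 <;> by_cases hvt : v2 = w t <;>
        first
          | (exfalso; apply d01; rw [← hu0, ← hu1])
          | (exfalso; apply d01; rw [← hv0, ← hv1])
          | (exfalso; apply d0t; rw [← hu0, ← hut])
          | (exfalso; apply d0t; rw [← hv0, ← hvt])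
          | (exfalso; apply d1t; rw [← hu1, ← hut])
          | (exfalso; apply d1t; rw [← hv1, ← hvt])
          | (exfalso; apply huv; rw [hu1, ← hv1])
          | (exfalso; apply huv; rw [hu0, ← hv0])
          | (exfalso; apply huv; rw [hut, ← hvt])
          | (exfalso; exact hn1 ⟨hv0, hut⟩)
          | (exfalso; exact hn2 ⟨hvt, hu0⟩)
          | (simp [hcx, hcy, cxF, cyF, d01, d0t, d1t, d01.symm, d0t.symm, d1t.symm,
              hu1, hu0, hut, hv1, hv0, hvt] <;> omega)
    ext p
    obtain ⟨g, h'⟩ := p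
    simp only [hyS, hxS, Set.mem_union, Set.mem_setOf_eq, Set.mem_singleton_iff, Prod.mk.injEq]
    constructor
    · rintro ⟨hpA, hlt⟩
      by_cases hbcase : g = w 0 ∧ h' = w t
      · exact Or.inr hbcase
      · left
        refine ⟨hpA, ?_⟩
        have hne : h' ≠ g := fun hh => hA.1 (g, h') hpA (by simp [hh])
        have hn2 : ¬(g = w t ∧ h' = w 0) := by
          rintro ⟨rfl, rfl⟩
          exact hA.2.1 _ hb (by simpa using hpA)
        rw [key h' g hne (by tauto) (by tauto)]
        exact hlt
    · rintro (⟨hpA, hlt⟩ | ⟨rfl, rfl⟩)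
      · refine ⟨hpA, ?_⟩
        have hne : h' ≠ g := fun hh => hA.1 (g, h') hpA (by simp [hh])
        have hn2 : ¬(g = w t ∧ h' = w 0) := by
          rintro ⟨rfl, rfl⟩
          exact hA.2.1 _ hb (by simpa using hpA)
        by_cases hbcase : g = w 0 ∧ h' = w t
        · obtain ⟨rfl, rfl⟩ := hbcase
          exact hbny.2
        · rw [← key h' g hne (by tauto) (by tauto)]
          exact hlt
      · exact ⟨hb, hbny.2⟩
  -- now the lattice argument
  letI D : DistribLattice (ARP A) := arpDistribLattice h1 h2 h3
  have hsup : ∀ a b : ARP A, IsLUB {a, b} (a ⊔ b) := fun a b => (h1 a b).choose_spec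
  have hinf : ∀ a b : ARP A, IsGLB {a, b} (a ⊓ b) := fun a b => (h2 a b).choose_spec
  set X : ARP A := ⟨xS, hxmem⟩
  set Y : ARP A := ⟨yS, hymem⟩
  set Z : ARP A := ⟨zS, hzmem⟩
  have hXY : X ≤ Y := by
    show xS ⊆ yS
    rw [hyx]; exact Set.subset_union_left
  have hYZle : Y ⊓ Z ≤ X := by
    have hl : (Y ⊓ Z).1 ⊆ yS := inf_le_left (a := Y) (b := Z)
    have hr : (Y ⊓ Z).1 ⊆ zS := inf_le_right (a := Y) (b := Z)
    show (Y ⊓ Z).1 ⊆ xS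
    intro p hpmem
    have hpy := hl hpmem
    have hpz' := hr hpmem
    rw [hyx] at hpy
    rcases hpy with hpx | hpb
    · exact hpx
    · exfalso
      rw [Set.mem_singleton_iff] at hpb
      subst hpb
      exact hbnz hpz'
  have hYT : Y ≤ X ⊔ Z := by
    have hTx : xS ⊆ (X ⊔ Z).1 := le_sup_left (a := X) (b := Z)
    have hTz : zS ⊆ (X ⊔ Z).1 := le_sup_right (a := X) (b := Z)
    have hbT : ((w 0, w t) : V × V) ∈ (X ⊔ Z).1 := by
      by_contra hbnT
      apply shortcut_force hA w t ht hp hb (X ⊔ Z).2.1 ?_ hbnT (X ⊔ Z).2.2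
      intro i hi
      rcases Nat.eq_zero_or_pos i with rfl | hipos
      · exact hTx hp0x
      · exact hTz (hpz i hipos hi)
    show yS ⊆ (X ⊔ Z).1
    rw [hyx]
    intro p hpmem
    rcases hpmem with hpx | hpb
    · exact hTx hpx
    · rw [Set.mem_singleton_iff] at hpb; subst hpb; exact hbT
  have hdistrib : X ⊔ (Y ⊓ Z) = (X ⊔ Y) ⊓ (X ⊔ Z) := sup_inf_left X Y Z
  rw [sup_eq_left.mpr hYZle, sup_eq_right.mpr hXY, inf_eq_left.mpr hYT] at hdistrib
  have hcar : xS = yS := congrArg Subtype.val hdistrib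
  rw [hcar] at hbnx
  exact hbnx hbny

end Shortcut

section Singleton
variable {V : Type*} {A : Set (V × V)}

lemma singleton_cyclic_path (hA : IsDAG A) {a : V × V} (ha : a ∈ A)
    (hcyc : ¬ AcyclicArcs (reorient A {a})) :
    Relation.ReflTransGen (ArcRel (A \ {a})) a.1 a.2 := by
  set R := ArcRel (A \ {a}) with hR
  have aux : ∀ x y : V, Relation.TransGen (ArcRel (reorient A {a})) x y →
      Relation.TransGen R x y ∨
        (Relation.ReflTransGen R x a.2 ∧ Relation.ReflTransGen R a.1 y) := by
    intro x y hxy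
    induction hxy with
    | single h =>
      rename_i c
      rcases mem_reorient.1 h with ⟨hmem, hnot⟩ | hs
      · exact Or.inl (Relation.TransGen.single ⟨hmem, hnot⟩)
      · rw [Set.mem_singleton_iff] at hs
        have hx : x = a.2 := by rw [← hs]; rfl
        have hy : c = a.1 := by rw [← hs]; rfl
        refine Or.inr ⟨?_, ?_⟩
        · rw [← hx]
        · rw [← hy]

    | tail hxy' hstep ih =>
      rename_i y' y
      rcases mem_reorient.1 hstep with ⟨hmem, hnot⟩ | hs
      · rcases ih with h | ⟨h1, h2⟩
        · exact Or.inl (h.tail ⟨hmem, hnot⟩)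
        · exact Or.inr ⟨h1, h2.tail ⟨hmem, hnot⟩⟩
      · rw [Set.mem_singleton_iff] at hs
        have hx : y' = a.2 := by rw [← hs]; rfl
        have hy : y = a.1 := by rw [← hs]; rfl
        rcases ih with h | ⟨h1, h2⟩
        · refine Or.inr ⟨?_, ?_⟩
          · rw [← hx]; exact h.to_reflTransGen
          · rw [hy]
        · refine Or.inr ⟨h1, ?_⟩
          rw [hy]
  unfold AcyclicArcs at hcyc
  push_neg at hcyc
  obtain ⟨x, hx⟩ := hcyc
  rcases aux x x hx with h | ⟨h1, h2⟩
  · exfalso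
    apply hA.2.2 x
    refine Relation.TransGen.mono ?_ x x h
    intro p q hpq
    exact hpq.1
  · exact h2.trans h1

lemma chain_to_fun {r : V → V → Prop} {u v : V} {l : List V}
    (hch : List.Chain r u l) (hlast : (u :: l).getLast? = some v) (hnd : (u :: l).Nodup) :
    ∃ w : ℕ → V, w 0 = u ∧ w l.length = v ∧
      (∀ i ≤ l.length, ∀ j ≤ l.length, w i = w j → i = j) ∧
      (∀ i < l.length, r (w i) (w (i + 1))) := by
  refine ⟨fun i => (u :: l).getD i u, rfl, ?_, ?_, ?_⟩
  · show (u :: l).getD l.length u = v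
    have hne : (u :: l) ≠ [] := List.cons_ne_nil _ _
    have h1 : (u :: l).getLast hne = v := by
      have := List.getLast?_eq_getLast hne
      rw [hlast] at this
      exact (Option.some_inj.mp this.symm)
    rw [List.getD_eq_getElem (u :: l) u (by simp)]
    rw [List.getLast_eq_getElem] at h1
    simpa using h1
  · intro i hi j hj heq
    have heq' : (u :: l).get ⟨i, by simp; omega⟩ = (u :: l).get ⟨j, by simp; omega⟩ := by
      rw [← List.getD_eq_get (u :: l) u, ← List.getD_eq_get (u :: l) u]
      exact heq
    have := hnd.get_inj_iff.mp heq'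
    exact congrArg Fin.val this
  · intro i hi
    have hchain := chain_iff_get.mp hch
    have e1 : ∀ k (hk : k < l.length),
        (fun i => (u :: l).getD i u) (k + 1) = l.get ⟨k, hk⟩ := by
      intro k hk
      show (u :: l).getD (k + 1) u = _
      rw [List.getD_eq_getElem (u :: l) u (by simp; omega)]
      simp
    rcases Nat.eq_zero_or_pos i with rfl | hpos
    · have h0 : (0 : ℕ) < l.length := hi
      have := hchain.1 h0
      show r ((u :: l).getD 0 u) _
      rw [show (u :: l).getD 0 u = u from rfl, e1 0 h0]
      exact this
    · obtain ⟨k, rfl⟩ : ∃ k, i = k + 1 := ⟨i - 1, by omega⟩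
      have hk1 : k < l.length := by omega
      have hk2 : k + 1 < l.length := by omega
      have := hchain.2 k (by omega)
      rw [e1 k hk1, e1 (k + 1) hk2]
      exact this

lemma shortcut_of_singleton (hA : IsDAG A) {a : V × V} (ha : a ∈ A)
    (hcyc : ¬ AcyclicArcs (reorient A {a})) :
    ∃ (w : ℕ → V) (t : ℕ), 2 ≤ t ∧ (∀ i ≤ t, ∀ j ≤ t, w i = w j → i = j) ∧
      (∀ i < t, (w i, w (i + 1)) ∈ A) ∧ (w 0, w t) ∈ A := by
  classical
  obtain ⟨l, hch, hlast, hnd⟩ := exists_nodup_chain (singleton_cyclic_path hA ha hcyc)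
  have huv : a.1 ≠ a.2 := hA.1 a ha
  obtain ⟨w, hw0, hwt, hinj, hstep⟩ := chain_to_fun hch hlast hnd
  have ht2 : 2 ≤ l.length := by
    by_contra hcon
    push_neg at hcon
    have : l.length = 0 ∨ l.length = 1 := by omega
    rcases this with h0 | h1
    · rw [List.length_eq_zero_iff.mp h0] at hlast
      simp at hlast
      exact huv (by rw [← hlast])
    · obtain ⟨x, rfl⟩ := List.length_eq_one_iff.mp h1
      rw [List.Chain, List.chain_cons] at hch
      have hr : (a.1, x) ∈ A \ {a} := hch.1
      have hxv : x = a.2 := by simpa using hlast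
      apply hr.2
      rw [Set.mem_singleton_iff, hxv]
  refine ⟨w, l.length, ht2, hinj, ?_, ?_⟩
  · intro i hi
    exact (hstep i hi).1
  · rw [hw0, hwt]
    exact ha

end Singleton

section CaseII
variable {V : Type*} [Fintype V] {A : Set (V × V)}

lemma caseII_false (hA : IsDAG A)
    (h1 : ∀ x y : ARP A, ∃ z : ARP A, IsLUB {x, y} z)
    (h2 : ∀ x y : ARP A, ∃ z : ARP A, IsGLB {x, y} z)
    (h3 : ∀ x y z yz xyz xy xz : ARP A,
        IsGLB {y, z} yz → IsLUB {x, yz} xyz →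
        IsLUB {x, y} xy → IsLUB {x, z} xz → IsGLB {xy, xz} xyz)
    (hsing : ∀ a ∈ A, AcyclicArcs (reorient A {a}))
    (hex : ∃ B, B ⊆ A ∧ ¬ AcyclicArcs (reorient A B)) : False := by
  classical
  set P : ℕ → Prop := fun n => ∃ B, B ⊆ A ∧ ¬ AcyclicArcs (reorient A B) ∧ B.ncard = n
    with hP
  have hPex : ∃ n, P n := by
    obtain ⟨B, hBA, hBcyc⟩ := hex
    exact ⟨B.ncard, B, hBA, hBcyc, rfl⟩
  obtain ⟨B, hBA, hBcyc, hBcard⟩ := Nat.find_spec hPex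
  set m := Nat.find hPex with hm
  have hfin : ∀ s : Set (V × V), s.Finite := fun s => s.toFinite
  have hm0 : m ≠ 0 := by
    intro h0
    rw [h0] at hBcard
    rw [Set.ncard_eq_zero (hfin B)] at hBcard
    rw [hBcard, reorient_empty] at hBcyc
    exact hBcyc hA.2.2
  have hm1 : m ≠ 1 := by
    intro h0
    rw [h0, Set.ncard_eq_one] at hBcard
    obtain ⟨a, rfl⟩ := hBcard
    exact hBcyc (hsing a (hBA rfl))
  have hm2 : 1 < B.ncard := by omega
  obtain ⟨b1, hb1, b2, hb2, hne⟩ := (Set.one_lt_ncard (hfin B)).mp hm2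
  have hmin : ∀ C : Set (V × V), C ⊆ A → C.ncard < m → AcyclicArcs (reorient A C) := by
    intro C hCA hlt
    by_contra hc
    have : m ≤ C.ncard := Nat.find_min' hPex ⟨C, hCA, hc, rfl⟩
    omega
  have hycard : (B \ {b1}).ncard < m := by
    have := Set.ncard_diff_singleton_lt_of_mem hb1 (hfin B)
    omega
  have hzcard : (B \ {b2}).ncard < m := by
    have := Set.ncard_diff_singleton_lt_of_mem hb2 (hfin B)
    omega
  have hysub : B \ {b1} ⊆ A := fun p hp => hBA hp.1
  have hzsub : B \ {b2} ⊆ A := fun p hp => hBA hp.1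
  set Y : ARP A := ⟨B \ {b1}, hysub, hmin _ hysub hycard⟩ with hY
  set Z : ARP A := ⟨B \ {b2}, hzsub, hmin _ hzsub hzcard⟩ with hZ
  letI D : DistribLattice (ARP A) := arpDistribLattice h1 h2 h3
  set J := Y ⊔ Z with hJ
  have hJY : Y.1 ⊆ J.1 := le_sup_left (a := Y) (b := Z)
  have hJZ : Z.1 ⊆ J.1 := le_sup_right (a := Y) (b := Z)
  have hBJ : B ⊆ J.1 := by
    intro p hp
    by_cases hp1 : p = b1
    · exact hJZ ⟨hp, by simp [hp1, hne]⟩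
    · exact hJY ⟨hp, by simp [hp1]⟩
  have hJne : J.1 ≠ B := by
    intro h
    apply hBcyc
    rw [← h]
    exact J.2.2
  have hexa : ∃ a, a ∈ J.1 ∧ a ∉ B := by
    by_contra hcon
    push_neg at hcon
    exact hJne (Set.Subset.antisymm hcon hBJ)
  obtain ⟨a, haJ, haB⟩ := hexa
  have haA : a ∈ A := J.2.1 haJ
  set Xa : ARP A := ⟨{a}, by simpa using haA, hsing a haA⟩ with hXa
  set Bot : ARP A := ⟨∅, empty_ARmem hA⟩ with hBot
  have hXaJ : Xa ≤ J := by
    show ({a} : Set (V × V)) ⊆ J.1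
    simpa using haJ
  have hiJ : Xa ⊓ J = Xa := inf_eq_left.mpr hXaJ
  have hglb : ∀ W : ARP A, W.1 ⊆ B \ {b1} ∨ W.1 ⊆ B \ {b2} → Xa ⊓ W = Bot := by
    intro W hW
    have h1' : IsGLB {Xa, W} (Xa ⊓ W) := (h2 Xa W).choose_spec
    have h2' : IsGLB {Xa, W} Bot := by
      constructor
      · intro c hc
        rcases hc with rfl | hc
        · show (∅ : Set (V × V)) ⊆ _
          exact Set.empty_subset _
        · rw [Set.mem_singleton_iff] at hc
          subst hc
          show (∅ : Set (V × V)) ⊆ _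
          exact Set.empty_subset _
      · intro L hL
        have hLX : L.1 ⊆ {a} := hL (Set.mem_insert _ _)
        have hLW : L.1 ⊆ W.1 := hL (Set.mem_insert_of_mem _ rfl)
        show L.1 ⊆ (∅ : Set (V × V))
        intro p hp
        have hpa : p = a := hLX hp
        subst hpa
        rcases hW with hW | hW
        · exact absurd (hW (hLW hp)).1 haB
        · exact absurd (hW (hLW hp)).1 haB
    exact h1'.unique h2'
  have hiY : Xa ⊓ Y = Bot := hglb Y (Or.inl (le_refl _))
  have hiZ : Xa ⊓ Z = Bot := hglb Z (Or.inr (le_refl _))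
  have hdist : Xa ⊓ (Y ⊔ Z) = (Xa ⊓ Y) ⊔ (Xa ⊓ Z) := inf_sup_left Xa Y Z
  rw [← hJ, hiJ, hiY, hiZ, sup_idem] at hdist
  have : a ∈ (∅ : Set (V × V)) := by
    have hcar : ({a} : Set (V × V)) = ∅ := congrArg Subtype.val hdist
    rw [← hcar]
    rfl
  exact this
end CaseII

section Walks
variable {V : Type*}

def walkOfChain {G : SimpleGraph V} : (l : List V) → (u v : V) →
    List.Chain G.Adj u l → (u :: l).getLast? = some v → G.Walk u v
  | [], u, v, _, hlast =>
      (SimpleGraph.Walk.nil' u).copy rfl (by simpa using hlast)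
  | a :: l1, u, v, hch, hlast =>
      SimpleGraph.Walk.cons ((List.chain_cons.mp hch).1)
        (walkOfChain l1 a v (show List.Chain G.Adj a l1 from (List.chain_cons.mp hch).2)
          (by rwa [List.getLast?_cons_cons] at hlast))

lemma walkOfChain_length {G : SimpleGraph V} : ∀ (l : List V) (u v : V)
    (hch : List.Chain G.Adj u l) (hlast : (u :: l).getLast? = some v),
    (walkOfChain l u v hch hlast).length = l.length
  | [], u, v, _, hlast => by simp [walkOfChain]
  | a :: l1, u, v, hch, hlast => by
      simp only [walkOfChain, SimpleGraph.Walk.length_cons, List.length_cons]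
      rw [walkOfChain_length l1 a v]

lemma walkOfChain_support {G : SimpleGraph V} : ∀ (l : List V) (u v : V)
    (hch : List.Chain G.Adj u l) (hlast : (u :: l).getLast? = some v),
    (walkOfChain l u v hch hlast).support = u :: l
  | [], u, v, _, hlast => by simp [walkOfChain]
  | a :: l1, u, v, hch, hlast => by
      simp only [walkOfChain, SimpleGraph.Walk.support_cons]
      rw [walkOfChain_support l1 a v]

lemma forest_all_acyclic {A : Set (V × V)} (hA : IsDAG A) (hforest : IsForestArcs A) :
    ∀ B, B ⊆ A → AcyclicArcs (reorient A B) := by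
  intro B hBA v0 hv0
  set E := reorient A B with hE
  have hadj : ∀ p ∈ E, (undirectedGraph A).Adj p.1 p.2 := by
    intro p hp
    rw [undirectedGraph, SimpleGraph.fromRel_adj]
    refine ⟨reorient_ne hA hBA hp, ?_⟩
    rcases mem_reorient.1 hp with h | h
    · exact Or.inl h.1
    · right
      have := hBA h
      exact this
  obtain ⟨c, hstep, hrest⟩ := Relation.TransGen.head'_iff.mp hv0
  have hvc : v0 ≠ c := by
    intro h
    exact reorient_ne hA hBA hstep (by rw [← h])
  obtain ⟨l, hch, hlast, hnd⟩ := exists_nodup_chain hrest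
  have hlne : l ≠ [] := by
    rintro rfl
    simp at hlast
    exact hvc hlast.symm
  have hl2 : 2 ≤ l.length := by
    by_contra hcon
    push_neg at hcon
    have h1 : l.length = 1 := by
      have := List.length_pos_iff.mpr hlne
      omega
    obtain ⟨x, rfl⟩ := List.length_eq_one_iff.mp h1
    have hx : x = v0 := by simpa using hlast
    subst hx
    rw [List.Chain, List.chain_cons] at hch
    exact no_two_cycle hA hBA hstep hch.1
  -- two distinct paths from v0 to c
  have hadjv0c : (undirectedGraph A).Adj v0 c := hadj (v0, c) hstep
  set w1 : (undirectedGraph A).Walk v0 c := SimpleGraph.Walk.cons hadjv0c SimpleGraph.Walk.nil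
    with hw1
  have hchAdj : List.Chain (undirectedGraph A).Adj c l :=
    List.Chain.imp (fun a b hab => hadj (a, b) hab) hch
  set w2 : (undirectedGraph A).Walk v0 c := (walkOfChain l c v0 hchAdj hlast).reverse with hw2
  have hp1 : w1.IsPath := by
    rw [SimpleGraph.Walk.isPath_def, hw1]
    simp [hvc]
  have hp2 : w2.IsPath := by
    rw [SimpleGraph.Walk.isPath_def, hw2]
    rw [SimpleGraph.Walk.support_reverse, walkOfChain_support]
    rw [List.nodup_reverse]
    exact hnd
  have := SimpleGraph.isAcyclic_iff_path_unique.mp hforest ⟨w1, hp1⟩ ⟨w2, hp2⟩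
  have hlen : w1.length = w2.length := by rw [Subtype.mk_eq_mk.mp this]
  rw [hw1, hw2] at hlen
  rw [SimpleGraph.Walk.length_reverse, walkOfChain_length] at hlen
  simp at hlen
  omega

end Walks

section NotForest
variable {V : Type*} {A : Set (V × V)}

lemma mod_cycle_contra {n i : ℕ} (hn : 3 ≤ n) (hi : i < n)
    (h : i = ((i + 1) % n + 1) % n) : False := by
  rcases Nat.lt_or_ge (i + 1) n with h1 | h1
  · rw [Nat.mod_eq_of_lt h1] at h
    rcases Nat.lt_or_ge (i + 1 + 1) n with h2 | h2
    · rw [Nat.mod_eq_of_lt h2] at h; omega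
    · have he : i + 1 + 1 = n := by omega
      rw [he, Nat.mod_self] at h
      omega
  · have he : i + 1 = n := by omega
    rw [he, Nat.mod_self] at h
    rw [Nat.mod_eq_of_lt (by omega)] at h
    omega

lemma getLast?_cons_ne {α : Type*} (a : α) {l : List α} (h : l ≠ []) :
    (a :: l).getLast? = l.getLast? := by
  cases l with
  | nil => exact absurd rfl h
  | cons b m => rw [List.getLast?_cons_cons]

lemma not_forest_cyclic (hA : IsDAG A) (hnf : ¬ IsForestArcs A) :
    ∃ B, B ⊆ A ∧ ¬ AcyclicArcs (reorient A B) := by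
  classical
  unfold IsForestArcs SimpleGraph.IsAcyclic at hnf
  push_neg at hnf
  obtain ⟨v, c, hcyc⟩ := hnf
  set L := c.support.tail with hL
  have hsupp : c.support = v :: L := c.support_eq_cons
  have hnd : L.Nodup := hcyc.2
  have hn3 : 3 ≤ c.length := hcyc.three_le_length
  have hLlen : L.length = c.length := by
    have h := c.length_support
    rw [hsupp] at h; simp at h; omega
  obtain ⟨n, hn⟩ : ∃ k, L.length = k := ⟨_, rfl⟩
  have hn3' : 3 ≤ n := by omega
  have hLne : L ≠ [] := by
    intro h; rw [h] at hn; simp at hn; omega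
  have hchain : List.Chain (undirectedGraph A).Adj v L := by
    have h := c.isChain_adj_support
    rw [hsupp] at h
    exact h
  have hlastL : L.getLast hLne = v := by
    have h := c.getLast_support
    have hq : c.support.getLast? = some v := by
      rw [List.getLast?_eq_getLast (by rw [hsupp]; exact List.cons_ne_nil _ _)]
      exact congrArg some h
    rw [hsupp] at hq
    have h3 : L.getLast? = some v := by
      rw [← getLast?_cons_ne v hLne]
      exact hq
    exact (List.getLast_eq_iff_getLast?_eq_some hLne).mpr h3
  set f : ℕ → V := fun i => (v :: L.dropLast).getD i v with hf
  have hdlen : (v :: L.dropLast).length = n := by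
    simp [List.length_dropLast]
    omega
  have hdecomp : L.dropLast ++ [v] = L := by
    rw [← hlastL]
    exact List.dropLast_append_getLast hLne
  have hsplit : v :: L = (v :: L.dropLast) ++ [v] := by
    rw [List.cons_append, hdecomp]
  have hndd : (v :: L.dropLast).Nodup := by
    have h2 : (L.dropLast ++ [v]).Nodup := by rw [hdecomp]; exact hnd
    rw [List.nodup_append] at h2
    refine List.nodup_cons.mpr ⟨?_, h2.1⟩
    intro hv
    exact h2.2.2 v hv v (by simp) rfl
  have hfg : ∀ i (h : i < n), f i = (v :: L).get ⟨i, by simp only [List.length_cons]; omega⟩ := by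
    intro i h
    rw [hf]
    show (v :: L.dropLast).getD i v = _
    rw [List.getD_eq_getElem _ _ (by rw [hdlen]; exact h)]
    simp only [List.get_eq_getElem]
    rw [List.getElem_of_eq hsplit]
    rw [List.getElem_append_left (by omega)]
  have hgetn : ∀ m (hm : m < (v :: L).length), m = n → (v :: L).get ⟨m, hm⟩ = v := by
    intro m hm hmn
    simp only [List.get_eq_getElem]
    rw [List.getElem_of_eq hsplit]
    exact List.getElem_concat_length (by omega) _
  have hfinj : ∀ i, i < n → ∀ j, j < n → f i = f j → i = j := by
    intro i hi j hj heq
    rw [hf] at heq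
    have hi' : i < (v :: L.dropLast).length := by omega
    have hj' : j < (v :: L.dropLast).length := by omega
    simp only at heq
    rw [List.getD_eq_getElem _ _ hi', List.getD_eq_getElem _ _ hj'] at heq
    exact hndd.getElem_inj_iff.mp heq
  have hchainget := chain_iff_get.mp hchain
  have hadjget : ∀ i (hi : i < n),
      (undirectedGraph A).Adj ((v :: L).get ⟨i, by simp only [List.length_cons]; omega⟩)
        ((v :: L).get ⟨i + 1, by simp only [List.length_cons]; omega⟩) := by
    intro i hi
    rcases Nat.eq_zero_or_pos i with rfl | hpos
    · have h0 := hchainget.1 (by omega)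
      exact h0
    · obtain ⟨k, rfl⟩ : ∃ k, i = k + 1 := ⟨i - 1, by omega⟩
      have hk := hchainget.2 k (by omega)
      exact hk
  have hF2 : ∀ i, i < n → (undirectedGraph A).Adj (f i) (f ((i + 1) % n)) := by
    intro i hi
    rcases Nat.lt_or_ge (i + 1) n with h | h
    · have hmod : (i + 1) % n = i + 1 := Nat.mod_eq_of_lt h
      rw [hfg i hi, hmod, hfg (i + 1) (by omega)]
      exact hadjget i hi
    · have hmod : (i + 1) % n = 0 := by
        rw [show i + 1 = n by omega, Nat.mod_self]
      rw [hmod, hfg i hi, hfg 0 (by omega)]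
      have hadj := hadjget i hi
      rw [hgetn (i + 1) (by simp only [List.length_cons]; omega) (by omega)] at hadj
      have h0 : (v :: L).get ⟨0, by simp only [List.length_cons]; omega⟩ = v := rfl
      rw [h0]
      exact hadj
  set B : Set (V × V) := {p | p ∈ A ∧ ∃ i, i < n ∧ p = (f ((i + 1) % n), f i)} with hB
  refine ⟨B, fun p hp => hp.1, ?_⟩
  intro hac
  apply hac (f 0)
  have hstep : ∀ i, i < n → ArcRel (reorient A B) (f i) (f ((i + 1) % n)) := by
    intro i hi
    have hAdj := hF2 i hi
    rw [undirectedGraph, SimpleGraph.fromRel_adj] at hAdj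
    obtain ⟨hne, hor | hor⟩ := hAdj
    · refine mem_reorient.2 (Or.inl ⟨hor, ?_⟩)
      intro hmem
      obtain ⟨-, j, hj, heq⟩ := hmem
      have e := Prod.ext_iff.mp heq
      have e1 : f i = f ((j + 1) % n) := e.1
      have e2 : f ((i + 1) % n) = f j := e.2
      have hj1 : (j + 1) % n < n := Nat.mod_lt _ (by omega)
      have hi1 : (i + 1) % n < n := Nat.mod_lt _ (by omega)
      have eI : i = (j + 1) % n := hfinj _ hi _ hj1 e1
      have eJ : (i + 1) % n = j := hfinj _ hi1 _ hj e2
      rw [← eJ] at eI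
      exact mod_cycle_contra hn3' hi eI
    · refine mem_reorient.2 (Or.inr ?_)
      exact ⟨hor, i, hi, rfl⟩
  have claim : ∀ k, 1 ≤ k → k < n → Relation.TransGen (ArcRel (reorient A B)) (f 0) (f k) := by
    intro k
    induction k with
    | zero => omega
    | succ kk ih =>
      intro _ hk
      rcases Nat.eq_zero_or_pos kk with rfl | hpos
      · have h0 := hstep 0 (by omega)
        rw [Nat.mod_eq_of_lt (by omega)] at h0
        exact Relation.TransGen.single h0
      · have hs := hstep kk (by omega)
        rw [Nat.mod_eq_of_lt (by omega)] at hs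
        exact (ih hpos (by omega)).tail hs
  have hlaststep := hstep (n - 1) (by omega)
  rw [show (n - 1 + 1) % n = 0 by rw [Nat.sub_add_cancel (by omega)]; exact Nat.mod_self n]
    at hlaststep
  exact (claim (n - 1) (by omega) (by omega)).tail hlaststep

end NotForest

/-- The acyclic reorientation poset is a distributive lattice if
and only if the underlying undirected graph of `D` is a forest. -/
theorem stmt_11 {V : Type*} [Fintype V] (A : Set (V × V)) (hA : IsDAG A) :
    ((∀ x y : ARP A, ∃ z : ARP A, IsLUB {x, y} z) ∧
      (∀ x y : ARP A, ∃ z : ARP A, IsGLB {x, y} z) ∧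
      (∀ x y z yz xyz xy xz : ARP A,
        IsGLB {y, z} yz → IsLUB {x, yz} xyz →
        IsLUB {x, y} xy → IsLUB {x, z} xz → IsGLB {xy, xz} xyz)) ↔
    IsForestArcs A := by
  constructor
  · rintro ⟨h1, h2, h3⟩
    by_contra hnf
    obtain ⟨B, hBA, hBcyc⟩ := not_forest_cyclic hA hnf
    by_cases hsing : ∀ a ∈ A, AcyclicArcs (reorient A {a})
    · exact caseII_false hA h1 h2 h3 hsing ⟨B, hBA, hBcyc⟩
    · push_neg at hsing
      obtain ⟨a, haA, hacyc⟩ := hsing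
      obtain ⟨w, t, ht, hinj, hp, hb⟩ := shortcut_of_singleton hA haA hacyc
      exact caseI_false hA h1 h2 h3 w t ht hinj hp hb
  · intro hforest
    have hall := forest_all_acyclic hA hforest
    have hsupmem : ∀ x y : ARP A, ARmem A (x.1 ∪ y.1) := fun x y =>
      ⟨Set.union_subset x.2.1 y.2.1, hall _ (Set.union_subset x.2.1 y.2.1)⟩
    have hinfmem : ∀ x y : ARP A, ARmem A (x.1 ∩ y.1) := fun x y =>
      ⟨fun p hp => x.2.1 hp.1, hall _ (fun p hp => x.2.1 hp.1)⟩
    have hsupIs : ∀ x y : ARP A, IsLUB {x, y} ⟨x.1 ∪ y.1, hsupmem x y⟩ := by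
      intro x y
      constructor
      · rintro c (rfl | hc)
        · exact Set.subset_union_left
        · rw [Set.mem_singleton_iff] at hc
          subst hc
          exact Set.subset_union_right
      · intro W hW
        have hx : x ≤ W := hW (Set.mem_insert _ _)
        have hy : y ≤ W := hW (Set.mem_insert_of_mem _ rfl)
        exact Set.union_subset hx hy
    have hinfIs : ∀ x y : ARP A, IsGLB {x, y} ⟨x.1 ∩ y.1, hinfmem x y⟩ := by
      intro x y
      constructor
      · rintro c (rfl | hc)
        · exact Set.inter_subset_left
        · rw [Set.mem_singleton_iff] at hc
          subst hc
          exact Set.inter_subset_right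
      · intro W hW
        have hx : W ≤ x := hW (Set.mem_insert _ _)
        have hy : W ≤ y := hW (Set.mem_insert_of_mem _ rfl)
        exact Set.subset_inter hx hy
    refine ⟨fun x y => ⟨_, hsupIs x y⟩, fun x y => ⟨_, hinfIs x y⟩, ?_⟩
    intro x y z yz xyz xy xz hgyz hlxyz hlxy hlxz
    have hyz : yz = ⟨y.1 ∩ z.1, hinfmem y z⟩ := hgyz.unique (hinfIs y z)
    subst hyz
    have hxyz : xyz = ⟨x.1 ∪ (y.1 ∩ z.1), hsupmem x ⟨y.1 ∩ z.1, hinfmem y z⟩⟩ :=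
      hlxyz.unique (hsupIs x ⟨y.1 ∩ z.1, hinfmem y z⟩)
    subst hxyz
    have hxy : xy = ⟨x.1 ∪ y.1, hsupmem x y⟩ := hlxy.unique (hsupIs x y)
    subst hxy
    have hxz : xz = ⟨x.1 ∪ z.1, hsupmem x z⟩ := hlxz.unique (hsupIs x z)
    subst hxz
    constructor
    · rintro c (rfl | hc)
      · show x.1 ∪ (y.1 ∩ z.1) ⊆ x.1 ∪ y.1
        exact Set.union_subset_union_right _ Set.inter_subset_left
      · rw [Set.mem_singleton_iff] at hc
        subst hc
        show x.1 ∪ (y.1 ∩ z.1) ⊆ x.1 ∪ z.1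
        exact Set.union_subset_union_right _ Set.inter_subset_right
    · intro W hW
      have hx : W ≤ ⟨x.1 ∪ y.1, hsupmem x y⟩ := hW (Set.mem_insert _ _)
      have hy : W ≤ ⟨x.1 ∪ z.1, hsupmem x z⟩ := hW (Set.mem_insert_of_mem _ rfl)
      show W.1 ⊆ x.1 ∪ (y.1 ∩ z.1)
      rw [Set.union_inter_distrib_left]
      exact Set.subset_inter hx hy
end

section
/- Let D = (V, A) be a vertebrate directed acyclic graph, so that AR(D) is a lattice. Then AR(D) is congruence normal: for every join irreducible element J of AR(D) and every meet irreducible element M of AR(D) with J ≤ M, the congruences con(J_*, J) and con(M, M^*) of AR(D) are distinct. -/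
/-- Transitive reduction: delete every arc whose endpoints are joined by a
directed path of length at least 2. -/
def transRed {V : Type*} (E : Set (V × V)) : Set (V × V) :=
  {a ∈ E | ¬ ∃ w : V, ArcRel E a.1 w ∧ Relation.TransGen (ArcRel E) w a.2}

def inducedArcs {V : Type*} (A : Set (V × V)) (U : Set V) : Set (V × V) :=
  {a ∈ A | a.1 ∈ U ∧ a.2 ∈ U}

/-- The transitive reduction of any induced subgraph is a forest. -/
def Vertebrate {V : Type*} (A : Set (V × V)) : Prop :=
  ∀ U : Set V, IsForestArcs (transRed (inducedArcs A U))

/-- A lattice congruence of the acyclic reorientation lattice: an equivalence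
relation compatible with joins (least upper bounds) and meets (greatest lower
bounds). -/
def IsCong {V : Type*} (A : Set (V × V)) (r : ARP A → ARP A → Prop) : Prop :=
  Equivalence r ∧
    (∀ x x' y y' j j' : ARP A,
      r x x' → r y y' → IsLUB {x, y} j → IsLUB {x', y'} j' → r j j') ∧
    (∀ x x' y y' m m' : ARP A,
      r x x' → r y y' → IsGLB {x, y} m → IsGLB {x', y'} m' → r m m')

/-- `con(x,y)`: the finest congruence identifying `x` and `y` (the intersection of
all congruences identifying `x` and `y`). -/
def congGen {V : Type*} (A : Set (V × V)) (x y : ARP A) : ARP A → ARP A → Prop :=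
  fun a b => ∀ r : ARP A → ARP A → Prop, IsCong A r → r x y → r a b


open Relation

section Aux

variable {V : Type*}

theorem transGen_rev {r s : V → V → Prop} (h : ∀ x y, r x y → s y x) {a b : V}
    (ht : Relation.TransGen r a b) : Relation.TransGen s b a := by
  induction ht with
  | single h1 => exact TransGen.single (h _ _ h1)
  | tail _ hbc ih => exact (TransGen.single (h _ _ hbc)).trans ih

theorem reflTransGen_rev {r s : V → V → Prop} (h : ∀ x y, r x y → s y x) {a b : V}
    (ht : Relation.ReflTransGen r a b) : Relation.ReflTransGen s b a := by
  induction ht with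
  | refl => exact .refl
  | tail _ hbc ih => exact (ReflTransGen.single (h _ _ hbc)).trans ih

/-- Arcs lying on some directed walk from `c.1` to `c.2`. -/
def suppArcs (A : Set (V × V)) (c : V × V) : Set (V × V) :=
  {d | d ∈ A ∧ Relation.ReflTransGen (ArcRel A) c.1 d.1 ∧
      Relation.ReflTransGen (ArcRel A) d.2 c.2}

theorem suppArcs_subset (A : Set (V × V)) (c : V × V) : suppArcs A c ⊆ A :=
  fun _ hd => hd.1

theorem self_mem_suppArcs (A : Set (V × V)) {c : V × V} (hc : c ∈ A) :
    c ∈ suppArcs A c := ⟨hc, .refl, .refl⟩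

theorem suppArcs_trans {A : Set (V × V)} {c d : V × V} (hd : d ∈ suppArcs A c) :
    suppArcs A d ⊆ suppArcs A c :=
  fun e he => ⟨he.1, hd.2.1.trans he.2.1, he.2.2.trans hd.2.2⟩

theorem rtg_antisymm {A : Set (V × V)} (hA : AcyclicArcs A) {u v : V}
    (h1 : Relation.ReflTransGen (ArcRel A) u v)
    (h2 : Relation.ReflTransGen (ArcRel A) v u) : u = v := by
  by_contra hne
  rcases Relation.reflTransGen_iff_eq_or_transGen.mp h1 with h | h
  · exact hne h.symm
  · exact hA u (h.trans_left h2)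

theorem suppArcs_antisymm {A : Set (V × V)} (hA : IsDAG A) {c d : V × V}
    (h1 : c ∈ suppArcs A d) (h2 : d ∈ suppArcs A c) : c = d := by
  have e1 : d.1 = c.1 := rtg_antisymm hA.2.2 h1.2.1 h2.2.1
  have e2 : c.2 = d.2 := rtg_antisymm hA.2.2 h1.2.2 h2.2.2
  exact Prod.ext e1.symm e2

/-- An arc that is joined by a directed path of already-reversed arcs must be
reversed in any acyclic reorientation. -/
theorem mem_of_transGen_subset {A B Z : Set (V × V)} (hB : ARmem A B)
    (hZB : Z ⊆ B) {c : V × V} (hcA : c ∈ A)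
    (hp : Relation.TransGen (ArcRel Z) c.1 c.2) : c ∈ B := by
  by_contra hcB
  have h1 : ArcRel (reorient A B) c.1 c.2 := by
    left
    constructor
    · simpa using hcA
    · simpa using hcB
  have h2 : Relation.TransGen (ArcRel (reorient A B)) c.2 c.1 :=
    transGen_rev (fun x y hxy => Or.inr ⟨(x, y), hZB hxy, rfl⟩) hp
  exact hB.2 c.1 ((TransGen.single h1).trans h2)

/-- If there is no `Z`-path from `c.1` to `c.2`, then `Z` extends to an acyclic
reorientation avoiding `c`. -/
theorem exists_extension {A Z : Set (V × V)} (hA : IsDAG A) (hZ : Z ⊆ A)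
    {c : V × V} (hcA : c ∈ A) (hnp : ¬ Relation.TransGen (ArcRel Z) c.1 c.2) :
    ∃ C : Set (V × V), ARmem A C ∧ Z ⊆ C ∧ c ∉ C := by
  classical
  set rz : V → V → Prop := fun x y => (y, x) ∈ Z with hrz
  set h : V → V → Prop := fun x y => rz x y ∨ (x = c.1 ∧ y = c.2) with hh
  have hne : c.1 ≠ c.2 := hA.1 c hcA
  have hZA : ∀ {α β : V}, Relation.ReflTransGen rz α β →
      Relation.ReflTransGen (ArcRel Z) β α :=
    fun hr => reflTransGen_rev (fun _ _ hxy => hxy) hr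
  have noc : Relation.ReflTransGen rz c.2 c.1 → False := by
    intro hr
    rcases Relation.reflTransGen_iff_eq_or_transGen.mp (hZA hr) with e | t
    · exact hne e.symm
    · exact hnp t
  have noZcyc : ∀ u v : V, u ≠ v → Relation.ReflTransGen rz u v →
      Relation.ReflTransGen rz v u → False := by
    intro u v huv h1 h2
    rcases Relation.reflTransGen_iff_eq_or_transGen.mp (hZA h1) with e | t
    · exact huv e
    · exact hA.2.2 v (Relation.TransGen.trans_left
        (Relation.TransGen.mono (fun x y hxy => hZ hxy) _ _ t)
        (Relation.ReflTransGen.mono (fun x y hxy => hZ hxy) _ _ (hZA h2)))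
  have key : ∀ u v : V, Relation.ReflTransGen h u v →
      Relation.ReflTransGen rz u v ∨
        (Relation.ReflTransGen rz u c.1 ∧ Relation.ReflTransGen rz c.2 v) := by
    intro u v hr
    induction hr with
    | refl => exact Or.inl .refl
    | @tail b v' hub hbv ih =>
      rcases hbv with hbv | ⟨rfl, rfl⟩
      · rcases ih with h1 | ⟨h1, h2⟩
        · exact Or.inl (h1.tail hbv)
        · exact Or.inr ⟨h1, h2.tail hbv⟩
      · rcases ih with h1 | ⟨h1, h2⟩
        · exact Or.inr ⟨h1, .refl⟩
        · exact absurd h2 (noc)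
  have antis : ∀ u v : V, Relation.ReflTransGen h u v →
      Relation.ReflTransGen h v u → u = v := by
    intro u v huv hvu
    rcases key u v huv with h1 | ⟨h1a, h1b⟩ <;> rcases key v u hvu with h2 | ⟨h2a, h2b⟩
    · by_contra hne'
      exact noZcyc u v hne' h1 h2
    · exact absurd ((h2b.trans h1).trans h2a) (noc)
    · exact absurd ((h1b.trans h2).trans h1a) (noc)
    · exact absurd (h1b.trans h2a) (noc)
  letI pleOrd : IsPartialOrder V (fun u v => Relation.ReflTransGen h u v) :=
    { refl := fun _ => .refl
      trans := fun _ _ _ h1 h2 => h1.trans h2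
      antisymm := antis }
  obtain ⟨s, hs, hsub⟩ := extend_partialOrder (fun u v => Relation.ReflTransGen h u v)
  have stot : ∀ a b : V, s a b ∨ s b a := by haveI := hs; exact fun a b => Std.Total.total a b
  have santi : ∀ a b : V, s a b → s b a → a = b := by haveI := hs; exact fun a b => Std.Antisymm.antisymm a b
  have strans : ∀ a b c' : V, s a b → s b c' → s a c' :=
    hs.toIsPartialOrder.toIsPreorder.toIsTrans.trans
  set C : Set (V × V) := {d | d ∈ A ∧ ¬ s d.1 d.2} with hCdef
  have hCA : C ⊆ A := fun d hd => hd.1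
  have hCacyc : AcyclicArcs (reorient A C) := by
    have hstep : ∀ x y : V, ArcRel (reorient A C) x y → s x y ∧ x ≠ y := by
      intro x y hxy
      rcases hxy with ⟨hxyA, hxyC⟩ | ⟨d, hdC, hde⟩
      · refine ⟨?_, hA.1 (x, y) hxyA⟩
        by_contra hns
        exact hxyC ⟨hxyA, hns⟩
      · have hd : d = (y, x) := by
          have := congrArg Prod.swap hde
          simpa using this
        subst hd
        rcases stot x y with hxy | hyx
        · exact ⟨hxy, (hA.1 (y, x) hdC.1).symm⟩
        · exact absurd hyx hdC.2
    have htr : Transitive (fun x y : V => s x y ∧ x ≠ y) := by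
      intro a b c' h1 h2
      refine ⟨strans _ _ _ h1.1 h2.1, ?_⟩
      rintro rfl
      exact h1.2 (santi _ _ h1.1 h2.1)
    intro v hv
    have h2 : Relation.TransGen (fun x y : V => s x y ∧ x ≠ y) v v :=
      Relation.TransGen.mono hstep _ _ hv
    rw [@Relation.transGen_eq_self _ _ ⟨htr⟩] at h2
    exact h2.2 rfl
  refine ⟨C, ⟨hCA, hCacyc⟩, ?_, ?_⟩
  · intro d hd
    have hsd : s d.2 d.1 := hsub _ _ (Relation.ReflTransGen.single (Or.inl hd))
    exact ⟨hZ hd, fun hsd' => hA.1 d (hZ hd) (santi _ _ hsd' hsd)⟩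
  · intro hcC
    exact hcC.2 (hsub _ _ (Relation.ReflTransGen.single (Or.inr ⟨rfl, rfl⟩)))

end Aux


section Char

variable {V : Type*}

theorem arp_le_iff {A : Set (V × V)} {x y : ARP A} : x ≤ y ↔ x.val ⊆ y.val := Iff.rfl

/-- Characterization of least upper bounds in the acyclic reorientation poset. -/
theorem lub_val {A : Set (V × V)} (hA : IsDAG A) {x y j : ARP A}
    (h : IsLUB {x, y} j) :
    j.val = {d | d ∈ A ∧ Relation.TransGen (ArcRel (x.val ∪ y.val)) d.1 d.2} := by
  have hxj : x.val ⊆ j.val := h.1 (by simp)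
  have hyj : y.val ⊆ j.val := h.1 (by simp)
  have hZA : x.val ∪ y.val ⊆ A := Set.union_subset x.2.1 y.2.1
  apply Set.Subset.antisymm
  · intro d hd
    have hdA : d ∈ A := j.2.1 hd
    refine ⟨hdA, ?_⟩
    by_contra hnp
    obtain ⟨C, hC, hZC, hdC⟩ := exists_extension hA hZA hdA hnp
    have hub : (⟨C, hC⟩ : ARP A) ∈ upperBounds {x, y} := by
      rintro z hz
      rcases hz with rfl | hz
      · exact fun e he => hZC (Or.inl he)
      · simp only [Set.mem_singleton_iff] at hz
        subst hz
        exact fun e he => hZC (Or.inr he)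
    exact hdC (h.2 hub hd)
  · rintro d ⟨hdA, hdp⟩
    exact mem_of_transGen_subset j.2 (Set.union_subset hxj hyj) hdA hdp

/-- Complementation inside the acyclic reorientation poset. -/
def arCompl {A : Set (V × V)} (B : ARP A) : ARP A := by
  refine ⟨A \ B.val, Set.diff_subset, ?_⟩
  intro v hv
  apply B.2.2 v
  refine transGen_rev (fun x y hxy => ?_) hv
  rcases hxy with ⟨hxyA, hxyB⟩ | ⟨d, hdB, hde⟩
  · have hmem : (x, y) ∈ B.val := by
      by_contra hnx
      exact hxyB ⟨hxyA, hnx⟩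
    exact Or.inr ⟨(x, y), hmem, rfl⟩
  · have hd : d = (y, x) := by
      have := congrArg Prod.swap hde
      simpa using this
    subst hd
    exact Or.inl hdB

theorem arCompl_val {A : Set (V × V)} (B : ARP A) : (arCompl B).val = A \ B.val := rfl

theorem glb_val {A : Set (V × V)} (hA : IsDAG A) {x y g : ARP A}
    (h : IsGLB {x, y} g) :
    g.val = {d | d ∈ A ∧
      ¬ Relation.TransGen (ArcRel ((A \ x.val) ∪ (A \ y.val))) d.1 d.2} := by
  have hgx : g.val ⊆ x.val := h.1 (by simp)
  have hgy : g.val ⊆ y.val := h.1 (by simp)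
  have hL : IsLUB {arCompl x, arCompl y} (arCompl g) := by
    constructor
    · rintro z hz
      rcases hz with rfl | hz
      · exact fun e he => ⟨he.1, fun hg => he.2 (hgx hg)⟩
      · simp only [Set.mem_singleton_iff] at hz
        subst hz
        exact fun e he => ⟨he.1, fun hg => he.2 (hgy hg)⟩
    · intro b hb
      have hxb : (arCompl x).val ⊆ b.val := hb (by simp)
      have hyb : (arCompl y).val ⊆ b.val := hb (by simp)
      have hlb : arCompl b ∈ lowerBounds {x, y} := by
        rintro z hz
        rcases hz with rfl | hz
        · intro e he
          by_contra hex
          exact he.2 (hxb ⟨he.1, hex⟩)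
        · simp only [Set.mem_singleton_iff] at hz
          subst hz
          intro e he
          by_contra hey
          exact he.2 (hyb ⟨he.1, hey⟩)
      have hbg : (arCompl b).val ⊆ g.val := h.2 hlb
      intro e he
      by_contra heb
      exact he.2 (hbg ⟨he.1, heb⟩)
  have hval := lub_val hA hL
  rw [arCompl_val, arCompl_val, arCompl_val] at hval
  have hgval : g.val = A \ (A \ g.val) := (Set.diff_diff_cancel_left g.2.1).symm
  rw [hgval, hval]
  ext d
  simp only [Set.mem_diff, Set.mem_setOf_eq]
  tauto

/-- Any path forcing an arc `c` stays within the support of `c`. -/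
theorem transGen_inter_supp {A Z : Set (V × V)} (hZ : Z ⊆ A) {c : V × V} :
    ∀ {u v : V}, Relation.TransGen (ArcRel Z) u v →
      Relation.ReflTransGen (ArcRel A) c.1 u →
      Relation.ReflTransGen (ArcRel A) v c.2 →
      Relation.TransGen (ArcRel (Z ∩ suppArcs A c)) u v := by
  intro u v hp
  induction hp with
  | @single b h1 =>
    intro hcu hvc
    exact Relation.TransGen.single ⟨h1, hZ h1, hcu, hvc⟩
  | @tail b v' hub hbv ih =>
    intro hcu hvc
    have hbc2 : Relation.ReflTransGen (ArcRel A) b c.2 :=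
      (Relation.ReflTransGen.single (hZ hbv)).trans hvc
    have hub' := ih hcu hbc2
    have hc1b : Relation.ReflTransGen (ArcRel A) c.1 b :=
      hcu.trans ((Relation.TransGen.mono (fun x y hxy => hZ hxy) _ _ hub).to_reflTransGen)
    exact hub'.tail ⟨hbv, hZ hbv, hc1b, hvc⟩

/-- A support-closed set of arcs. -/
def SuppClosed (A S : Set (V × V)) : Prop :=
  S ⊆ A ∧ ∀ c ∈ S, suppArcs A c ⊆ S

theorem isCong_restrict {A : Set (V × V)} (hA : IsDAG A) {S : Set (V × V)}
    (hS : SuppClosed A S) :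
    IsCong A (fun B B' => B.val ∩ S = B'.val ∩ S) := by
  have key : ∀ (Z Z' : Set (V × V)), Z ⊆ A → Z' ⊆ A → Z ∩ S = Z' ∩ S →
      ∀ d ∈ S, Relation.TransGen (ArcRel Z) d.1 d.2 →
        Relation.TransGen (ArcRel Z') d.1 d.2 := by
    intro Z Z' hZ hZ' hZS d hdS hp
    have h1 := transGen_inter_supp hZ (c := d) hp .refl .refl
    refine Relation.TransGen.mono (fun x y hxy => ?_) _ _ h1
    have hxS : (x, y) ∈ Z ∩ S := ⟨hxy.1, hS.2 d hdS hxy.2⟩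
    rw [hZS] at hxS
    exact hxS.1
  refine ⟨⟨fun _ => rfl, Eq.symm, Eq.trans⟩, ?_, ?_⟩
  · intro x x' y y' j j' rx ry hj hj'
    have e1 := lub_val hA hj
    have e2 := lub_val hA hj'
    have hZS : (x.val ∪ y.val) ∩ S = (x'.val ∪ y'.val) ∩ S := by
      rw [Set.union_inter_distrib_right, Set.union_inter_distrib_right, rx, ry]
    ext d
    simp only [Set.mem_inter_iff, e1, e2, Set.mem_setOf_eq]
    constructor
    · rintro ⟨⟨hdA, hp⟩, hdS⟩
      exact ⟨⟨hdA, key _ _ (Set.union_subset x.2.1 y.2.1)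
        (Set.union_subset x'.2.1 y'.2.1) hZS d hdS hp⟩, hdS⟩
    · rintro ⟨⟨hdA, hp⟩, hdS⟩
      exact ⟨⟨hdA, key _ _ (Set.union_subset x'.2.1 y'.2.1)
        (Set.union_subset x.2.1 y.2.1) hZS.symm d hdS hp⟩, hdS⟩
  · intro x x' y y' g g' rx ry hg hg'
    have e1 := glb_val hA hg
    have e2 := glb_val hA hg'
    have hZS : ((A \ x.val) ∪ (A \ y.val)) ∩ S = ((A \ x'.val) ∪ (A \ y'.val)) ∩ S := by
      rw [Set.union_inter_distrib_right, Set.union_inter_distrib_right]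
      have hx : (A \ x.val) ∩ S = (A \ x'.val) ∩ S := by
        ext e
        simp only [Set.mem_inter_iff, Set.mem_diff]
        constructor
        · rintro ⟨⟨heA, hex⟩, heS⟩
          refine ⟨⟨heA, fun hex' => hex ?_⟩, heS⟩
          have : e ∈ x'.val ∩ S := ⟨hex', heS⟩
          rw [← rx] at this
          exact this.1
        · rintro ⟨⟨heA, hex⟩, heS⟩
          refine ⟨⟨heA, fun hex' => hex ?_⟩, heS⟩
          have : e ∈ x.val ∩ S := ⟨hex', heS⟩
          rw [rx] at this
          exact this.1
      have hy : (A \ y.val) ∩ S = (A \ y'.val) ∩ S := by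
        ext e
        simp only [Set.mem_inter_iff, Set.mem_diff]
        constructor
        · rintro ⟨⟨heA, hey⟩, heS⟩
          refine ⟨⟨heA, fun hey' => hey ?_⟩, heS⟩
          have : e ∈ y'.val ∩ S := ⟨hey', heS⟩
          rw [← ry] at this
          exact this.1
        · rintro ⟨⟨heA, hey⟩, heS⟩
          refine ⟨⟨heA, fun hey' => hey ?_⟩, heS⟩
          have : e ∈ y.val ∩ S := ⟨hey', heS⟩
          rw [ry] at this
          exact this.1
      rw [hx, hy]
    ext d
    simp only [Set.mem_inter_iff, e1, e2, Set.mem_setOf_eq]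
    constructor
    · rintro ⟨⟨hdA, hp⟩, hdS⟩
      refine ⟨⟨hdA, fun hp' => hp ?_⟩, hdS⟩
      exact key _ _ (Set.union_subset Set.diff_subset Set.diff_subset)
        (Set.union_subset Set.diff_subset Set.diff_subset) hZS.symm d hdS hp'
    · rintro ⟨⟨hdA, hp⟩, hdS⟩
      refine ⟨⟨hdA, fun hp' => hp ?_⟩, hdS⟩
      exact key _ _ (Set.union_subset Set.diff_subset Set.diff_subset)
        (Set.union_subset Set.diff_subset Set.diff_subset) hZS d hdS hp'

end Char

/-- The acyclic reorientation lattice of a vertebrate directed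
acyclic graph is congruence normal. -/
theorem stmt_13 {V : Type*} [Fintype V] (A : Set (V × V)) (hA : IsDAG A)
    (hV : Vertebrate A) (J Jst M Mst : ARP A)
    (hJ : Jst ⋖ J) (hJu : ∀ C : ARP A, C ⋖ J → C = Jst)
    (hM : M ⋖ Mst) (hMu : ∀ C : ARP A, M ⋖ C → C = Mst)
    (hJM : J ≤ M) :
    congGen A Jst J ≠ congGen A M Mst := by
  classical
  intro hEq
  have hJle : Jst.val ⊆ J.val := hJ.le
  have hMle : M.val ⊆ Mst.val := hM.le
  have hJMv : J.val ⊆ M.val := hJM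
  set JD : Set (V × V) := J.val \ Jst.val with hJDdef
  set MD : Set (V × V) := Mst.val \ M.val with hMDdef
  have hJDne : JD.Nonempty := by
    have hlt : Jst.val ⊂ J.val := ⟨hJle, fun hc => hJ.lt.ne (le_antisymm hJ.lt.le hc)⟩
    obtain ⟨d, hd1, hd2⟩ := Set.exists_of_ssubset hlt
    exact ⟨d, hd1, hd2⟩
  have hMDne : MD.Nonempty := by
    have hlt : M.val ⊂ Mst.val := ⟨hMle, fun hc => hM.lt.ne (le_antisymm hM.lt.le hc)⟩
    obtain ⟨d, hd1, hd2⟩ := Set.exists_of_ssubset hlt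
    exact ⟨d, hd1, hd2⟩
  have hJDA : JD ⊆ A := fun d hd => J.2.1 hd.1
  have hMDA : MD ⊆ A := fun d hd => Mst.2.1 hd.1
  -- disjointness of witnesses
  have hdisj : ∀ a ∈ JD, ∀ b ∈ MD, a ≠ b := by
    intro a ha b hb hab
    exact hb.2 (hab ▸ hJMv ha.1)
  by_cases hPB : ∃ a ∈ JD, ∀ b ∈ MD, b ∉ suppArcs A a
  · -- a congruence identifying (M, Mst) but not (Jst, J)
    obtain ⟨a, haJD, haS⟩ := hPB
    set S : Set (V × V) := {c | c ∈ A ∧ ∀ b ∈ MD, b ∉ suppArcs A c} with hSdef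
    have hSc : SuppClosed A S := by
      refine ⟨fun c hc => hc.1, fun c hc d hd => ⟨suppArcs_subset A c hd, ?_⟩⟩
      intro b hb hbd
      exact hc.2 b hb (suppArcs_trans hd hbd)
    have hcong := isCong_restrict hA hSc
    have hMMst : M.val ∩ S = Mst.val ∩ S := by
      apply Set.Subset.antisymm
      · exact Set.inter_subset_inter_left S hMle
      · rintro d ⟨hdMst, hdS⟩
        by_cases hdM : d ∈ M.val
        · exact ⟨hdM, hdS⟩
        · exact absurd (self_mem_suppArcs A hdS.1) (hdS.2 d ⟨hdMst, hdM⟩)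
    have hneJ : Jst.val ∩ S ≠ J.val ∩ S := by
      intro he
      have haJ : a ∈ J.val ∩ S := ⟨haJD.1, J.2.1 haJD.1, haS⟩
      rw [← he] at haJ
      exact haJD.2 haJ.1
    have htriv : congGen A Jst J Jst J := fun r _ hr => hr
    rw [hEq] at htriv
    exact hneJ (htriv _ hcong hMMst)
  · by_cases hPA : ∃ b ∈ MD, ∀ a ∈ JD, a ∉ suppArcs A b
    · -- a congruence identifying (Jst, J) but not (M, Mst)
      obtain ⟨b, hbMD, hbS⟩ := hPA
      set S : Set (V × V) := {c | c ∈ A ∧ ∀ a ∈ JD, a ∉ suppArcs A c} with hSdef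
      have hSc : SuppClosed A S := by
        refine ⟨fun c hc => hc.1, fun c hc d hd => ⟨suppArcs_subset A c hd, ?_⟩⟩
        intro a ha had
        exact hc.2 a ha (suppArcs_trans hd had)
      have hcong := isCong_restrict hA hSc
      have hJJst : Jst.val ∩ S = J.val ∩ S := by
        apply Set.Subset.antisymm
        · exact Set.inter_subset_inter_left S hJle
        · rintro d ⟨hdJ, hdS⟩
          by_cases hdJst : d ∈ Jst.val
          · exact ⟨hdJst, hdS⟩
          · exact absurd (self_mem_suppArcs A hdS.1) (hdS.2 d ⟨hdJ, hdJst⟩)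
      have hneM : M.val ∩ S ≠ Mst.val ∩ S := by
        intro he
        have hbM : b ∈ Mst.val ∩ S := ⟨hbMD.1, Mst.2.1 hbMD.1, hbS⟩
        rw [← he] at hbM
        exact hbMD.2 hbM.1
      have htriv : congGen A M Mst M Mst := fun r _ hr => hr
      rw [← hEq] at htriv
      exact hneM (htriv _ hcong hJJst)
    · -- impossible: minimal support descent
      push_neg at hPB hPA
      set W : Set (V × V) := JD ∪ MD with hWdef
      have hWfin : W.Finite := Set.toFinite W
      have hWne : W.Nonempty := hJDne.mono Set.subset_union_left
      obtain ⟨c0, hc0W, hmin⟩ :=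
        Set.exists_min_image W (fun c => (suppArcs A c).ncard) hWfin hWne
      rcases hc0W with hc0 | hc0
      · obtain ⟨b, hbMD, hbsupp⟩ := hPB c0 hc0
        have hssub : suppArcs A b ⊂ suppArcs A c0 := by
          refine ⟨suppArcs_trans hbsupp, fun hsup => ?_⟩
          have hc0b : c0 ∈ suppArcs A b := hsup (self_mem_suppArcs A (hJDA hc0))
          exact hdisj c0 hc0 b hbMD (suppArcs_antisymm hA hc0b hbsupp)
        have hlt := Set.ncard_lt_ncard hssub (Set.toFinite _)
        exact absurd (hmin b (Or.inr hbMD)) (not_le.mpr hlt)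
      · obtain ⟨a, haJD, hasupp⟩ := hPA c0 hc0
        have hssub : suppArcs A a ⊂ suppArcs A c0 := by
          refine ⟨suppArcs_trans hasupp, fun hsup => ?_⟩
          have hc0a : c0 ∈ suppArcs A a := hsup (self_mem_suppArcs A (hMDA hc0))
          exact hdisj a haJD c0 hc0 ((suppArcs_antisymm hA hc0a hasupp).symm)
        have hlt := Set.ncard_lt_ncard hssub (Set.toFinite _)
        exact absurd (hmin a (Or.inl haJD)) (not_le.mpr hlt)
end

section
/- Let D = (V, A) be a skeletal directed acyclic graph. Then (i) the number of ropes of D equals the sum over all arcs a ∈ A of 2^(ts(a) − 2), where ts(a) denotes the cardinality of the transitive support of a in D; and (ii) the ropes of D are in bijection with the cliques of D with at least 2 vertices, where a clique of D is a subset K ⊆ V any two distinct vertices of which are joined by an arc of A. -/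
/-- For every directed path from `u` to `v` with `(u,v) ∈ A`, any two vertices of
the path are joined by an arc of `A`. -/
def Filled {V : Type*} (A : Set (V × V)) : Prop :=
  ∀ p : List V, p.Chain' (fun x y => (x, y) ∈ A) →
    ∀ u v : V, p.head? = some u → p.getLast? = some v → (u, v) ∈ A →
      ∀ x ∈ p, ∀ y ∈ p, x ≠ y → ((x, y) ∈ A ∨ (y, x) ∈ A)

def Skeletal {V : Type*} (A : Set (V × V)) : Prop := Vertebrate A ∧ Filled A

/-- Vertices lying on some directed path in `A` from `u` to `v` (including `u` and `v`). -/
def transSupport {V : Type*} (A : Set (V × V)) (u v : V) : Set V :=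
  {w : V | Relation.ReflTransGen (ArcRel A) u w ∧ Relation.ReflTransGen (ArcRel A) w v}

/-- Data of a quadruple `(u, v, Δ, ∇)`. -/
structure RopeData (V : Type*) where
  u : V
  v : V
  down : Set V
  up : Set V

/-- A rope of `A`: `(u,v) ∈ A` and `Δ, ∇` are disjoint sets whose union is the
transitive support of `(u,v)` minus `{u, v}`. -/
def IsRope {V : Type*} (A : Set (V × V)) (r : RopeData V) : Prop :=
  (r.u, r.v) ∈ A ∧ r.down ∩ r.up = ∅ ∧
    r.down ∪ r.up = transSupport A r.u r.v \ {r.u, r.v}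

section AuxLemmas

variable {V : Type*} {A : Set (V × V)} {u v x y : V}

lemma aux_no_two_way (hA : IsDAG A) (h1 : Relation.ReflTransGen (ArcRel A) u x)
    (h2 : (x, u) ∈ A) : False := by
  rcases Relation.reflTransGen_iff_eq_or_transGen.mp h1 with rfl | h1
  · exact hA.1 _ h2 rfl
  · exact hA.2.2 u (h1.tail h2)

lemma aux_mem_ts_left (huv : (u, v) ∈ A) : u ∈ transSupport A u v :=
  ⟨Relation.ReflTransGen.refl, Relation.ReflTransGen.single huv⟩

lemma aux_mem_ts_right (huv : (u, v) ∈ A) : v ∈ transSupport A u v :=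
  ⟨Relation.ReflTransGen.single huv, Relation.ReflTransGen.refl⟩

lemma aux_filled_pair (hF : Filled A) (huv : (u, v) ∈ A)
    (hx : x ∈ transSupport A u v) :
    ∀ y ∈ ({u, v} : Set V), x ≠ y → ((x, y) ∈ A ∨ (y, x) ∈ A) := by
  obtain ⟨h1, h2⟩ := hx
  obtain ⟨l1, hc1, hl1⟩ := List.exists_isChain_cons_of_relationReflTransGen h1
  obtain ⟨l2, hc2, hl2⟩ := List.exists_isChain_cons_of_relationReflTransGen h2
  set p : List V := (u :: l1) ++ l2 with hp
  have hchain : p.Chain' (fun a b => (a, b) ∈ A) := by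
    rw [hp, List.Chain', List.isChain_append]
    refine ⟨hc1, (List.isChain_cons.mp hc2).2, ?_⟩
    intro a ha b hb
    rw [List.getLast?_eq_getLast (List.cons_ne_nil _ _), Option.mem_some_iff] at ha
    subst ha; rw [hl1]
    cases l2 with
    | nil => simp at hb
    | cons c l2' =>
      simp only [List.head?_cons, Option.mem_some_iff] at hb; subst hb
      exact (List.chain_cons.mp hc2).1
  have hhead : p.head? = some u := rfl
  have hlast : p.getLast? = some v := by
    cases l2 with
    | nil =>
      simp only [hp, List.append_nil]
      rw [List.getLast?_eq_getLast (List.cons_ne_nil _ _), hl1]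
      simpa using hl2
    | cons c l2' =>
      rw [hp, List.getLast?_append_of_ne_nil _ (by simp),
        List.getLast?_eq_getLast (by simp)]
      have := hl2
      rw [List.getLast_cons (by simp)] at this
      rw [this]
  have hxp : x ∈ p := by
    have : x ∈ (u :: l1) := hl1 ▸ List.getLast_mem _
    exact List.mem_append_left _ this
  have hup : u ∈ p := List.mem_append_left _ List.mem_cons_self
  have hvp : v ∈ p := by
    have : v ∈ (x :: l2) := hl2 ▸ List.getLast_mem _
    rcases List.mem_cons.mp this with rfl | hv
    · exact hxp
    · exact List.mem_append_right _ hv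
  intro z hz hne
  rcases hz with rfl | hz
  · exact hF p hchain _ _ hhead hlast huv x hxp _ hup hne
  · rcases hz with rfl
    exact hF p hchain _ _ hhead hlast huv x hxp _ hvp hne

lemma aux_arc_to_mem (hA : IsDAG A) (hF : Filled A) (huv : (u, v) ∈ A)
    (hx : x ∈ transSupport A u v) (hne : x ≠ u) : (u, x) ∈ A := by
  rcases aux_filled_pair hF huv hx u (by simp) hne with h | h
  · exact absurd hx.1 (fun h1 => aux_no_two_way hA h1 h)
  · exact h

lemma aux_arc_from_mem (hA : IsDAG A) (hF : Filled A) (huv : (u, v) ∈ A)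
    (hx : x ∈ transSupport A u v) (hne : x ≠ v) : (x, v) ∈ A := by
  rcases aux_filled_pair hF huv hx v (by simp) hne with h | h
  · exact h
  · exact absurd hx.2 (fun h2 => by
      rcases Relation.reflTransGen_iff_eq_or_transGen.mp h2 with rfl | h2
      · exact hne rfl
      · exact hA.2.2 v (Relation.TransGen.head h h2))

lemma aux_four_cycle (hA : IsDAG A) (hV : Vertebrate A)
    (hux : (u, x) ∈ A) (hxv : (x, v) ∈ A) (huy : (u, y) ∈ A) (hyv : (y, v) ∈ A)
    (huv : (u, v) ∈ A) (hxy : x ≠ y) : (x, y) ∈ A ∨ (y, x) ∈ A := by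
  by_contra hcon
  push_neg at hcon
  obtain ⟨hnxy, hnyx⟩ := hcon
  have hu_x : u ≠ x := hA.1 _ hux
  have hu_y : u ≠ y := hA.1 _ huy
  have hx_v : x ≠ v := hA.1 _ hxv
  have hy_v : y ≠ v := hA.1 _ hyv
  have hu_v : u ≠ v := hA.1 _ huv
  set U : Set V := {u, x, y, v} with hU
  set E := inducedArcs A U with hE
  have hchar : ∀ a b : V, (a, b) ∈ E →
      (a, b) = (u, x) ∨ (a, b) = (u, y) ∨ (a, b) = (x, v) ∨ (a, b) = (y, v) ∨
        (a, b) = (u, v) := by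
    rintro a b ⟨hab, ha, hb⟩
    have hswap : ∀ c d : V, (c, d) ∈ A → (d, c) ∉ A := by
      intro c d h hcd; exact hA.2.1 _ h hcd
    simp only [hU, Set.mem_insert_iff, Set.mem_singleton_iff] at ha hb
    rcases ha with rfl | rfl | rfl | rfl <;> rcases hb with rfl | rfl | rfl | rfl <;>
      first
        | exact absurd rfl (hA.1 _ hab)
        | exact absurd hab (hswap _ _ hux)
        | exact absurd hab (hswap _ _ huy)
        | exact absurd hab (hswap _ _ hxv)
        | exact absurd hab (hswap _ _ hyv)
        | exact absurd hab (hswap _ _ huv)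
        | exact absurd hab hnxy
        | exact absurd hab hnyx
        | tauto
  have hmemE : ∀ c d : V, (c, d) ∈ A → c ∈ U → d ∈ U → (c, d) ∈ E := by
    intro c d h hc hd; exact ⟨h, hc, hd⟩
  have hno_in_u : ∀ b : V, (b, u) ∉ E := by
    intro b hb
    rcases hchar _ _ hb with h | h | h | h | h <;> simp only [Prod.mk.injEq] at h <;> tauto
  have hno_out_v : ∀ b : V, (v, b) ∉ E := by
    intro b hb
    rcases hchar _ _ hb with h | h | h | h | h <;> simp only [Prod.mk.injEq] at h <;> tauto
  have hno_tg_u : ∀ z : V, ¬ Relation.TransGen (ArcRel E) z u := by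
    intro z hz
    cases hz with
    | single h => exact hno_in_u _ h
    | tail h1 h2 => exact hno_in_u _ h2
  have hno_tg_from_v : ∀ z : V, ¬ Relation.TransGen (ArcRel E) v z := by
    have key : ∀ a z : V, Relation.TransGen (ArcRel E) a z → a = v → False := by
      intro a z h
      induction h with
      | single h => rintro rfl; exact hno_out_v _ h
      | tail h1 h2 ih => exact ih
    intro z hz; exact key v z hz rfl
  have honly_in_x : ∀ b : V, (b, x) ∈ E → b = u := by
    intro b hb
    rcases hchar _ _ hb with h | h | h | h | h <;> simp only [Prod.mk.injEq] at h <;> tauto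
  have honly_in_y : ∀ b : V, (b, y) ∈ E → b = u := by
    intro b hb
    rcases hchar _ _ hb with h | h | h | h | h <;> simp only [Prod.mk.injEq] at h <;> tauto
  have honly_out_x : ∀ b : V, (x, b) ∈ E → b = v := by
    intro b hb
    rcases hchar _ _ hb with h | h | h | h | h <;> simp only [Prod.mk.injEq] at h <;> tauto
  have honly_out_y : ∀ b : V, (y, b) ∈ E → b = v := by
    intro b hb
    rcases hchar _ _ hb with h | h | h | h | h <;> simp only [Prod.mk.injEq] at h <;> tauto
  have hmU : u ∈ U ∧ x ∈ U ∧ y ∈ U ∧ v ∈ U := by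
    refine ⟨?_, ?_, ?_, ?_⟩ <;> simp [hU]
  have hred_in : ∀ b : V, (u, b) ∈ E → (∀ c : V, (c, b) ∈ E → c = u) →
      (u, b) ∈ transRed E := by
    intro b hb honly
    refine ⟨hb, ?_⟩
    rintro ⟨w, h1, h2⟩
    cases h2 with
    | single h =>
      have := honly _ h; subst this
      exact hA.1 _ h1.1 rfl
    | tail h3 h4 =>
      have := honly _ h4; subst this
      exact hno_tg_u _ h3
  have hred_out : ∀ b : V, (b, v) ∈ E → (∀ c : V, (b, c) ∈ E → c = v) →
      (b, v) ∈ transRed E := by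
    intro b hb honly
    refine ⟨hb, ?_⟩
    rintro ⟨w, h1, h2⟩
    have := honly _ h1; subst this
    exact hno_tg_from_v _ h2
  have m1 : (u, x) ∈ transRed E := hred_in x (hmemE _ _ hux hmU.1 hmU.2.1) honly_in_x
  have m2 : (u, y) ∈ transRed E := hred_in y (hmemE _ _ huy hmU.1 hmU.2.2.1) honly_in_y
  have m3 : (x, v) ∈ transRed E :=
    hred_out x (hmemE _ _ hxv hmU.2.1 hmU.2.2.2) honly_out_x
  have m4 : (y, v) ∈ transRed E :=
    hred_out y (hmemE _ _ hyv hmU.2.2.1 hmU.2.2.2) honly_out_y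
  set G := undirectedGraph (transRed E) with hG
  have adj : ∀ a b : V, a ≠ b → (a, b) ∈ transRed E → G.Adj a b := by
    intro a b hne h
    rw [hG, undirectedGraph, SimpleGraph.fromRel_adj]
    exact ⟨hne, Or.inl h⟩
  have a1 : G.Adj u x := adj _ _ hu_x m1
  have a2 : G.Adj x v := adj _ _ hx_v m3
  have a3 : G.Adj u y := adj _ _ hu_y m2
  have a4 : G.Adj y v := adj _ _ hy_v m4
  have hac : G.IsAcyclic := hV U
  rw [SimpleGraph.isAcyclic_iff_path_unique] at hac
  have hp : (SimpleGraph.Walk.cons a1 (SimpleGraph.Walk.cons a2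
      SimpleGraph.Walk.nil)).IsPath := by
    rw [SimpleGraph.Walk.isPath_def]
    simp [hu_x, hu_v, hx_v]
  have hq : (SimpleGraph.Walk.cons a3 (SimpleGraph.Walk.cons a4
      SimpleGraph.Walk.nil)).IsPath := by
    rw [SimpleGraph.Walk.isPath_def]
    simp [hu_y, hu_v, hy_v]
  have := hac ⟨_, hp⟩ ⟨_, hq⟩
  have hsupp := congrArg (fun p : G.Path u v => p.1.support) this
  simp only [SimpleGraph.Walk.support_cons, SimpleGraph.Walk.support_nil] at hsupp
  simp only [List.cons.injEq, and_true, true_and] at hsupp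
  exact hxy hsupp

lemma aux_ts_clique (hA : IsDAG A) (hS : Skeletal A) (huv : (u, v) ∈ A) :
    ∀ x ∈ transSupport A u v, ∀ y ∈ transSupport A u v,
      x ≠ y → (x, y) ∈ A ∨ (y, x) ∈ A := by
  intro x hx y hy hne
  by_cases hxu : x = u
  · subst hxu; exact Or.inl (aux_arc_to_mem hA hS.2 huv hy (fun h => hne h.symm))
  by_cases hyu : y = u
  · subst hyu; exact Or.inr (aux_arc_to_mem hA hS.2 huv hx hxu)
  by_cases hxv : x = v
  · subst hxv; exact Or.inr (aux_arc_from_mem hA hS.2 huv hy (fun h => hne h.symm))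
  by_cases hyv : y = v
  · subst hyv; exact Or.inl (aux_arc_from_mem hA hS.2 huv hx hxv)
  exact aux_four_cycle hA hS.1 (aux_arc_to_mem hA hS.2 huv hx hxu)
    (aux_arc_from_mem hA hS.2 huv hx hxv) (aux_arc_to_mem hA hS.2 huv hy hyu)
    (aux_arc_from_mem hA hS.2 huv hy hyv) huv hne

lemma aux_exists_source (hA : IsDAG A) (s : Finset V) (hs : s.Nonempty)
    (hc : ∀ x ∈ s, ∀ y ∈ s, x ≠ y → (x, y) ∈ A ∨ (y, x) ∈ A) :
    ∃ u ∈ s, ∀ x ∈ s, x ≠ u → (u, x) ∈ A := by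
  classical
  induction s using Finset.induction_on with
  | empty => exact absurd hs (by simp)
  | @insert a t hat ih =>
    rcases t.eq_empty_or_nonempty with rfl | ht
    · exact ⟨a, by simp, by intro x hx hne; simp at hx; exact absurd hx hne⟩
    · obtain ⟨u, hu, hsrc⟩ := ih ht (fun x hx y hy => hc x (Finset.mem_insert_of_mem hx)
        y (Finset.mem_insert_of_mem hy))
      have hau : a ≠ u := fun h => hat (h ▸ hu)
      rcases hc a (Finset.mem_insert_self _ _) u (Finset.mem_insert_of_mem hu) hau with h | h
      · refine ⟨a, Finset.mem_insert_self _ _, ?_⟩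
        intro x hx hne
        rcases Finset.mem_insert.mp hx with rfl | hx
        · exact absurd rfl hne
        · by_cases hxu : x = u
          · exact hxu ▸ h
          · have hux := hsrc x hx hxu
            have hax : a ≠ x := fun he => hat (he ▸ hx)
            rcases hc a (Finset.mem_insert_self _ _) x (Finset.mem_insert_of_mem hx) hax
              with h2 | h2
            · exact h2
            · exact absurd ((Relation.TransGen.single (show ArcRel A u x from hux)).tail
                (show ArcRel A x a from h2) |>.tail (show ArcRel A a u from h)) (hA.2.2 u)
      · refine ⟨u, Finset.mem_insert_of_mem hu, ?_⟩
        intro x hx hne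
        rcases Finset.mem_insert.mp hx with rfl | hx
        · exact h
        · exact hsrc x hx hne

lemma aux_isDAG_swap (hA : IsDAG A) : IsDAG (Prod.swap ⁻¹' A) := by
  refine ⟨?_, ?_, ?_⟩
  · intro a ha; exact fun h => hA.1 _ ha h.symm
  · intro a ha hsw
    exact hA.2.1 _ (by simpa using hsw) (by simpa using ha)
  · intro v hv
    refine hA.2.2 v ?_
    have : ∀ a b : V, Relation.TransGen (ArcRel (Prod.swap ⁻¹' A)) a b →
        Relation.TransGen (ArcRel A) b a := by
      intro a b h
      induction h with
      | single h => exact Relation.TransGen.single h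
      | tail h1 h2 ih => exact Relation.TransGen.head h2 ih
    exact this v v hv

lemma aux_exists_sink (hA : IsDAG A) (s : Finset V) (hs : s.Nonempty)
    (hc : ∀ x ∈ s, ∀ y ∈ s, x ≠ y → (x, y) ∈ A ∨ (y, x) ∈ A) :
    ∃ v ∈ s, ∀ x ∈ s, x ≠ v → (x, v) ∈ A := by
  obtain ⟨u, hu, hsrc⟩ := aux_exists_source (aux_isDAG_swap hA) s hs
    (fun x hx y hy hne => (hc x hx y hy hne).symm.imp (fun h => h) (fun h => h))
  exact ⟨u, hu, fun x hx hne => hsrc x hx hne⟩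

lemma aux_part_diff {α : Type*} {d e t : Set α} (h1 : d ∩ e = ∅) (h2 : d ∪ e = t) :
    t \ d = e := by
  have h1' := Set.eq_empty_iff_forall_notMem.mp h1
  ext z
  constructor
  · rintro ⟨hz, hzd⟩
    rcases (h2 ▸ hz : z ∈ d ∪ e) with h | h
    · exact absurd h hzd
    · exact h
  · intro hz
    exact ⟨h2 ▸ Or.inr hz, fun hd => h1' z ⟨hd, hz⟩⟩

end AuxLemmas

lemma aux_ropedata_ext {V : Type*} {r1 r2 : RopeData V} (h1 : r1.u = r2.u)
    (h2 : r1.v = r2.v) (h3 : r1.down = r2.down) (h4 : r1.up = r2.up) : r1 = r2 := by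
  cases r1; cases r2; simp_all

/-- Counting the ropes of a skeletal directed acyclic graph, and
bijection with the cliques with at least two vertices. -/
theorem stmt_15 {V : Type*} [Fintype V] (A : Set (V × V)) (hA : IsDAG A)
    (hS : Skeletal A) :
    Nat.card {r : RopeData V // IsRope A r} =
      ∑ a ∈ A.toFinite.toFinset, 2 ^ ((transSupport A a.1 a.2).ncard - 2) ∧
    Nonempty ({r : RopeData V // IsRope A r} ≃
      {K : Set V // 2 ≤ K.ncard ∧
        ∀ x ∈ K, ∀ y ∈ K, x ≠ y → ((x, y) ∈ A ∨ (y, x) ∈ A)}) := by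
  classical
  set arcs := A.toFinite.toFinset with harcs
  have hmemarcs : ∀ a : V × V, a ∈ arcs ↔ a ∈ A := fun a => Set.Finite.mem_toFinset _
  set T : V → V → Set V := fun a b => transSupport A a b \ {a, b} with hT
  have hdown_sub : ∀ r : RopeData V, IsRope A r → r.down ⊆ T r.u r.v := by
    intro r hr z hz
    have hz2 : z ∈ r.down ∪ r.up := Or.inl hz
    rw [hr.2.2] at hz2
    exact hz2
  have hup_eq : ∀ r : RopeData V, IsRope A r → r.up = T r.u r.v \ r.down :=
    fun r hr => (aux_part_diff hr.2.1 hr.2.2).symm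
  -- Part (i): the counting equivalence
  have e1 : {r : RopeData V // IsRope A r} ≃
      (a : {a : V × V // a ∈ arcs}) × Set ↥(T (a : V × V).1 (a : V × V).2) :=
    { toFun := fun r => ⟨⟨(r.1.u, r.1.v), (hmemarcs _).mpr r.2.1⟩,
        {x : ↥(T r.1.u r.1.v) | (x : V) ∈ r.1.down}⟩
      invFun := fun p => ⟨⟨(p.1 : V × V).1, (p.1 : V × V).2, Subtype.val '' p.2,
          T (p.1 : V × V).1 (p.1 : V × V).2 \ (Subtype.val '' p.2)⟩,
        (hmemarcs _).mp p.1.2, Set.inter_diff_self _ _,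
        Set.union_diff_cancel (by rintro z ⟨x, hx, rfl⟩; exact x.2)⟩
      left_inv := by
        rintro ⟨⟨ru, rv, rd, rup⟩, hr⟩
        apply Subtype.ext
        have hd : Subtype.val '' {x : ↥(T ru rv) | (x : V) ∈ rd} = rd := by
          ext z
          constructor
          · rintro ⟨x, hx, rfl⟩; exact hx
          · intro hz; exact ⟨⟨z, hdown_sub _ hr hz⟩, hz, rfl⟩
        simp only [hd]
        have hup : T ru rv \ rd = rup := aux_part_diff hr.2.1 hr.2.2
        rw [hup]
      right_inv := by
        rintro ⟨⟨⟨pu, pv⟩, ha⟩, S⟩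
        refine Sigma.ext rfl (heq_of_eq ?_)
        ext x
        simp only [Set.mem_setOf_eq]
        exact Subtype.val_injective.mem_set_image }
  have hcard1 : Nat.card {r : RopeData V // IsRope A r} =
      ∑ a ∈ arcs, 2 ^ ((transSupport A a.1 a.2).ncard - 2) := by
    rw [Nat.card_congr e1, Nat.card_eq_fintype_card, Fintype.card_sigma]
    have hterm : ∀ a : {a : V × V // a ∈ arcs},
        Fintype.card (Set ↥(T (a : V × V).1 (a : V × V).2)) =
          2 ^ ((transSupport A (a : V × V).1 (a : V × V).2).ncard - 2) := by
      intro a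
      have haA : ((a : V × V).1, (a : V × V).2) ∈ A := (hmemarcs _).mp a.2
      have hpair : ({(a : V × V).1, (a : V × V).2} : Set V) ⊆
          transSupport A (a : V × V).1 (a : V × V).2 := by
        rintro z (rfl | rfl)
        · exact aux_mem_ts_left haA
        · exact aux_mem_ts_right haA
      have hncard : (T (a : V × V).1 (a : V × V).2).ncard =
          (transSupport A (a : V × V).1 (a : V × V).2).ncard - 2 := by
        rw [hT]
        rw [Set.ncard_diff hpair (Set.toFinite _), Set.ncard_pair (hA.1 _ haA)]
      rw [Fintype.card_set, ← hncard, ← Nat.card_coe_set_eq, Nat.card_eq_fintype_card]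
    rw [Finset.sum_congr rfl (fun a _ => hterm a)]
    exact Finset.sum_coe_sort arcs (fun a => 2 ^ ((transSupport A a.1 a.2).ncard - 2))
  -- Part (ii): bijection with cliques
  have hsubK : ∀ r : RopeData V, IsRope A r →
      ({r.u, r.v} ∪ r.down : Set V) ⊆ transSupport A r.u r.v := by
    rintro r hr z ((rfl | rfl) | hz)
    · exact aux_mem_ts_left hr.1
    · exact aux_mem_ts_right hr.1
    · exact (hdown_sub r hr hz).1
  let toC : {r : RopeData V // IsRope A r} → {K : Set V // 2 ≤ K.ncard ∧
      ∀ x ∈ K, ∀ y ∈ K, x ≠ y → ((x, y) ∈ A ∨ (y, x) ∈ A)} := fun r =>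
    ⟨{r.1.u, r.1.v} ∪ r.1.down,
      le_trans (le_of_eq (Set.ncard_pair (hA.1 _ r.2.1)).symm)
        (Set.ncard_le_ncard Set.subset_union_left (Set.toFinite _)),
      fun x hx y hy hne => aux_ts_clique hA hS r.2.1 x (hsubK r.1 r.2 hx)
        y (hsubK r.1 r.2 hy) hne⟩
  have hrope_src : ∀ r : RopeData V, IsRope A r →
      ∀ x ∈ ({r.u, r.v} ∪ r.down : Set V), x ≠ r.u → (r.u, x) ∈ A := by
    rintro r hr x ((rfl | rfl) | hx) hne
    · exact absurd rfl hne
    · exact hr.1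
    · exact aux_arc_to_mem hA hS.2 hr.1 (hdown_sub r hr hx).1 hne
  have hrope_snk : ∀ r : RopeData V, IsRope A r →
      ∀ x ∈ ({r.u, r.v} ∪ r.down : Set V), x ≠ r.v → (x, r.v) ∈ A := by
    rintro r hr x ((rfl | rfl) | hx) hne
    · exact hr.1
    · exact absurd rfl hne
    · exact aux_arc_from_mem hA hS.2 hr.1 (hdown_sub r hr hx).1 hne
  have hdownK : ∀ r : RopeData V, IsRope A r →
      r.down = ({r.u, r.v} ∪ r.down) \ {r.u, r.v} := by
    intro r hr
    ext z
    constructor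
    · intro hz; exact ⟨Or.inr hz, (hdown_sub r hr hz).2⟩
    · rintro ⟨(hz | hz), hz2⟩
      · exact absurd hz hz2
      · exact hz
  have hinj : Function.Injective toC := by
    rintro ⟨r1, h1⟩ ⟨r2, h2⟩ hEq
    have hK : ({r1.u, r1.v} ∪ r1.down : Set V) = {r2.u, r2.v} ∪ r2.down :=
      congrArg Subtype.val hEq
    have m1 : r1.u ∈ ({r2.u, r2.v} ∪ r2.down : Set V) := hK ▸ Or.inl (Or.inl rfl)
    have m2 : r2.u ∈ ({r1.u, r1.v} ∪ r1.down : Set V) := hK ▸ Or.inl (Or.inl rfl)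
    have m3 : r1.v ∈ ({r2.u, r2.v} ∪ r2.down : Set V) := hK ▸ Or.inl (Or.inr rfl)
    have m4 : r2.v ∈ ({r1.u, r1.v} ∪ r1.down : Set V) := hK ▸ Or.inl (Or.inr rfl)
    have hu : r1.u = r2.u := by
      by_contra hne
      exact hA.2.1 _ (hrope_src r1 h1 r2.u m2 (fun h => hne h.symm))
        (hrope_src r2 h2 r1.u m1 hne)
    have hv : r1.v = r2.v := by
      by_contra hne
      exact hA.2.1 _ (hrope_snk r2 h2 r1.v m3 hne)
        (hrope_snk r1 h1 r2.v m4 (fun h => hne h.symm))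
    have hdown : r1.down = r2.down := by
      rw [hdownK r1 h1, hdownK r2 h2, hK, hu, hv]
    have hupp : r1.up = r2.up := by
      rw [hup_eq r1 h1, hup_eq r2 h2, hu, hv, hdown]
    exact Subtype.ext (aux_ropedata_ext hu hv hdown hupp)
  have hsurj : Function.Surjective toC := by
    rintro ⟨K, hK2, hKcl⟩
    have hKne0 : K.Nonempty := Set.nonempty_of_ncard_ne_zero (s := K) (by omega)
    have hKne : K.toFinite.toFinset.Nonempty := by
      rw [Set.Finite.toFinset_nonempty]
      exact hKne0
    have hcf : ∀ x ∈ K.toFinite.toFinset, ∀ y ∈ K.toFinite.toFinset, x ≠ y →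
        ((x, y) ∈ A ∨ (y, x) ∈ A) := by
      intro x hx y hy
      rw [Set.Finite.mem_toFinset] at hx hy
      exact hKcl x hx y hy
    obtain ⟨u, hu, hsrc⟩ := aux_exists_source hA _ hKne hcf
    obtain ⟨v, hv, hsnk⟩ := aux_exists_sink hA _ hKne hcf
    rw [Set.Finite.mem_toFinset] at hu hv
    replace hsrc : ∀ x ∈ K, x ≠ u → (u, x) ∈ A :=
      fun x hx => hsrc x (K.toFinite.mem_toFinset.mpr hx)
    replace hsnk : ∀ x ∈ K, x ≠ v → (x, v) ∈ A :=
      fun x hx => hsnk x (K.toFinite.mem_toFinset.mpr hx)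
    have huvne : u ≠ v := by
      rintro rfl
      obtain ⟨a, ha, b, hb, hab⟩ := (Set.one_lt_ncard (s := K) (Set.toFinite _)).mp (by omega)
      rcases eq_or_ne a u with rfl | hau
      · exact hA.2.1 _ (hsrc b hb (fun h => hab h.symm)) (hsnk b hb (fun h => hab h.symm))
      · exact hA.2.1 _ (hsrc a ha hau) (hsnk a ha hau)
    have huv : (u, v) ∈ A := hsrc v hv (fun h => huvne h.symm)
    have hdsub : K \ {u, v} ⊆ T u v := by
      rintro z ⟨hz, hz2⟩
      simp only [Set.mem_insert_iff, Set.mem_singleton_iff, not_or] at hz2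
      exact ⟨⟨Relation.ReflTransGen.single (hsrc z hz hz2.1),
        Relation.ReflTransGen.single (hsnk z hz hz2.2)⟩, by simp [hz2.1, hz2.2]⟩
    refine ⟨⟨⟨u, v, K \ {u, v}, T u v \ (K \ {u, v})⟩,
      huv, Set.inter_diff_self _ _, Set.union_diff_cancel hdsub⟩, ?_⟩
    apply Subtype.ext
    show ({u, v} ∪ (K \ {u, v}) : Set V) = K
    ext z
    constructor
    · rintro ((rfl | rfl) | hz)
      · exact hu
      · exact hv
      · exact hz.1
    · intro hz
      by_cases hzu : z = u
      · exact Or.inl (Or.inl hzu)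
      by_cases hzv : z = v
      · exact Or.inl (Or.inr hzv)
      · exact Or.inr ⟨hz, by simp [hzu, hzv]⟩
  exact ⟨hcard1, ⟨Equiv.ofBijective toC ⟨hinj, hsurj⟩⟩⟩
end

section
/- Let D = (V, A) be a directed acyclic graph. The transitive reduction of every acyclic reorientation of D (i.e., of the reoriented graph E_B for every B ∈ AR(D)) is a forest if and only if D is chordful, i.e., the vertex set of every cycle of the underlying undirected graph of D induces a clique (any two distinct vertices of the cycle are joined by an arc of A in one direction or the other). (This is the combinatorial content of the statement that the graphical fan of D is simplicial if and only if D is chordful.) -/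
/-- `A` is chordful: the vertex set of every cycle of the underlying undirected
graph induces a clique. -/
def Chordful {V : Type*} (A : Set (V × V)) : Prop :=
  ∀ (v : V) (c : (undirectedGraph A).Walk v v), c.IsCycle →
    ∀ x ∈ c.support, ∀ y ∈ c.support, x ≠ y → ((x, y) ∈ A ∨ (y, x) ∈ A)


open SimpleGraph Walk Relation

section Helpers
variable {V : Type*}

lemma undirectedGraph_adj {A : Set (V × V)} {x y : V} :
    (undirectedGraph A).Adj x y ↔ x ≠ y ∧ ((x, y) ∈ A ∨ (y, x) ∈ A) := by
  simp [undirectedGraph, SimpleGraph.fromRel_adj]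

/-- orientation by a potential -/
def orientB (A : Set (V × V)) (f : V → ℕ) : Set (V × V) := {a ∈ A | f a.2 < f a.1}

lemma mem_reorient_orientB {A : Set (V × V)} (hA : IsDAG A) {f : V → ℕ}
    (hf : Function.Injective f) {u v : V} :
    (u, v) ∈ reorient A (orientB A f) ↔ ((u, v) ∈ A ∨ (v, u) ∈ A) ∧ f u < f v := by
  constructor
  · rintro (⟨h1, h2⟩ | ⟨⟨a, b⟩, hb, hs⟩)
    · refine ⟨Or.inl h1, ?_⟩
      have hne : u ≠ v := hA.1 _ h1
      have : ¬ f v < f u := by simpa [orientB, h1] using h2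
      rcases lt_trichotomy (f u) (f v) with h | h | h
      · exact h
      · exact absurd (hf h) hne
      · exact absurd h this
    · simp only [Prod.swap, Prod.ext_iff] at hs
      obtain ⟨hb1, hb2⟩ := hb
      refine ⟨Or.inr ?_, ?_⟩
      · rw [← hs.1, ← hs.2]; exact hb1
      · rw [← hs.1, ← hs.2]; exact hb2
  · rintro ⟨h1 | h1, hlt⟩
    · left
      exact ⟨h1, by simp [orientB, h1]; omega⟩
    · right
      exact ⟨(v, u), ⟨h1, hlt⟩, rfl⟩

lemma transGen_orientB_lt {A : Set (V × V)} (hA : IsDAG A) {f : V → ℕ}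
    (hf : Function.Injective f) {u v : V}
    (h : Relation.TransGen (ArcRel (reorient A (orientB A f))) u v) : f u < f v := by
  induction h with
  | single h => exact ((mem_reorient_orientB hA hf).mp h).2
  | tail _ h ih => exact ih.trans ((mem_reorient_orientB hA hf).mp h).2

lemma ARmem_orientB {A : Set (V × V)} (hA : IsDAG A) {f : V → ℕ}
    (hf : Function.Injective f) : ARmem A (orientB A f) := by
  refine ⟨fun a ha => ha.1, fun v h => ?_⟩
  exact lt_irrefl _ (transGen_orientB_lt hA hf h)

lemma mem_transRed_iff {E : Set (V × V)} {u v : V} :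
    (u, v) ∈ transRed E ↔ (u, v) ∈ E ∧
      ¬ ∃ w : V, (u, w) ∈ E ∧ Relation.TransGen (ArcRel E) w v := Iff.rfl

lemma transRed_subset {E : Set (V × V)} : transRed E ⊆ E := fun _ h => h.1

/-- every arc of a reorientation comes from an underlying edge -/
lemma reorient_subset_undAdj {A B : Set (V × V)} (hB : B ⊆ A) {u v : V}
    (h : (u, v) ∈ reorient A B) : (u, v) ∈ A ∨ (v, u) ∈ A := by
  rcases h with ⟨h, _⟩ | ⟨⟨a, b⟩, hb, hs⟩
  · exact Or.inl h
  · simp only [Prod.swap, Prod.ext_iff] at hs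
    right; rw [← hs.1, ← hs.2]; exact hB hb

lemma mem_reorient_of_mem {A B : Set (V × V)} {u v : V} (h : (u, v) ∈ A) :
    (u, v) ∈ reorient A B ∨ (v, u) ∈ reorient A B := by
  by_cases hb : (u, v) ∈ B
  · right; exact Or.inr ⟨(u, v), hb, rfl⟩
  · left; exact Or.inl ⟨h, hb⟩

end Helpers

section WalkLemmas
variable {V : Type*} {G H : SimpleGraph V}

lemma walk_support_eq_map {u v : V} (w : G.Walk u v) :
    w.support = (List.range (w.length + 1)).map w.getVert := by
  induction w with
  | nil => simp [Walk.getVert]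
  | cons h p ih =>
      rw [Walk.support_cons, Walk.length_cons]
      conv_rhs => rw [List.range_succ_eq_map]
      rw [List.map_cons, List.map_map]
      have hcomp : (Walk.cons h p).getVert ∘ Nat.succ = p.getVert := by
        funext n; rfl
      rw [hcomp, ← ih]
      rfl

lemma mem_edges_iff_getVert {u v : V} (w : G.Walk u v) {e : Sym2 V} :
    e ∈ w.edges ↔ ∃ i, i < w.length ∧ e = s(w.getVert i, w.getVert (i + 1)) := by
  induction w with
  | nil => simp
  | cons h p ih =>
      rw [Walk.edges_cons]
      simp only [List.mem_cons, ih, Walk.length_cons]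
      constructor
      · rintro (rfl | ⟨i, hi, rfl⟩)
        · exact ⟨0, by omega, by simp [Walk.getVert_zero, Walk.getVert_cons_succ]⟩
        · exact ⟨i + 1, by omega, by simp [Walk.getVert_cons_succ]⟩
      · rintro ⟨i, hi, rfl⟩
        cases i with
        | zero => left; simp [Walk.getVert_zero, Walk.getVert_cons_succ]
        | succ j => right; exact ⟨j, by omega, by simp [Walk.getVert_cons_succ]⟩

/-- injectivity of getVert on [0, length) for cycles -/
lemma cycle_getVert_inj {v : V} {c : G.Walk v v} (hc : c.IsCycle) :
    ∀ i j, i < c.length → j < c.length → c.getVert i = c.getVert j → i = j := by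
  have hnodup := hc.support_nodup
  rw [walk_support_eq_map] at hnodup
  rw [List.range_succ_eq_map] at hnodup
  simp only [List.map_cons, List.map_map] at hnodup
  -- tail = map (getVert ∘ succ) (range length)
  have htail : ∀ i j, i < c.length → j < c.length →
      c.getVert (i + 1) = c.getVert (j + 1) → i = j := by
    intro i j hi hj hget
    have := List.inj_on_of_nodup_map (f := c.getVert ∘ Nat.succ) (l := List.range c.length)
      (by simpa using hnodup)
    exact this (List.mem_range.mpr hi) (List.mem_range.mpr hj) (by simpa using hget)
  intro i j hi hj hij
  have h3 : 3 ≤ c.length := hc.three_le_length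
  rcases Nat.eq_zero_or_pos i with rfl | hi0
  · rcases Nat.eq_zero_or_pos j with rfl | hj0
    · rfl
    · -- getVert 0 = getVert j, use getVert length = v = getVert 0
      have h0 : c.getVert ((c.length - 1) + 1) = c.getVert ((j - 1) + 1) := by
        have : c.getVert c.length = c.getVert 0 := by
          rw [Walk.getVert_length, Walk.getVert_zero]
        have hl : (c.length - 1) + 1 = c.length := by omega
        rw [hl, this, hij]
        congr 1
        omega
      have := htail _ _ (by omega) (by omega) h0
      omega
  · rcases Nat.eq_zero_or_pos j with rfl | hj0
    · have h0 : c.getVert ((c.length - 1) + 1) = c.getVert ((i - 1) + 1) := by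
        have : c.getVert c.length = c.getVert 0 := by
          rw [Walk.getVert_length, Walk.getVert_zero]
        have hl : (c.length - 1) + 1 = c.length := by omega
        rw [hl, this, ← hij]
        congr 1
        omega
      have := htail _ _ (by omega) (by omega) h0
      omega
    · have := htail (i - 1) (j - 1) (by omega) (by omega)
        (by rw [show i - 1 + 1 = i by omega, show j - 1 + 1 = j by omega]; exact hij)
      omega

lemma isCycle_transfer {v : V} {c : G.Walk v v} (hc : c.IsCycle)
    (hp : ∀ e ∈ c.edges, e ∈ H.edgeSet) : (c.transfer H hp).IsCycle := by
  rw [Walk.isCycle_def, Walk.isTrail_def, Walk.edges_transfer, Walk.support_transfer]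
  refine ⟨hc.isCircuit.isTrail.edges_nodup, ?_, hc.support_nodup⟩
  intro hnil
  have h3 := hc.three_le_length
  have hlen : (c.transfer H hp).length = c.length := Walk.length_transfer c hp
  rw [hnil] at hlen
  simp at hlen
  omega

/-- extract the last-edge neighbor of the basepoint in a closed walk -/
lemma exists_penult {a m : V} (w : G.Walk a m) (hw : ¬ w.Nil) :
    ∃ b, G.Adj b m ∧ s(b, m) ∈ w.edges ∧ b ∈ w.support := by
  have hwr : ¬ w.reverse.Nil := by
    rw [Walk.nil_iff_length_eq, Walk.length_reverse, ← Walk.nil_iff_length_eq]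
    exact hw
  obtain ⟨b, hb, q, heq⟩ := Walk.not_nil_iff.mp hwr
  refine ⟨b, hb.symm, ?_, ?_⟩
  · have : s(m, b) ∈ w.reverse.edges := by rw [heq]; simp
    rw [Walk.edges_reverse, List.mem_reverse] at this
    simpa [Sym2.eq_swap] using this
  · have : b ∈ w.reverse.support := by rw [heq]; simp
    rwa [Walk.support_reverse, List.mem_reverse] at this

end WalkLemmas

section CaseA
variable {V : Type*} [Fintype V]

set_option maxHeartbeats 2000000 in
lemma caseA {A : Set (V × V)} (hA : IsDAG A) (p x y q : V)
    (hxy : x ≠ y) (hnadj : ¬ ((x, y) ∈ A ∨ (y, x) ∈ A))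
    (hpq : p ≠ q) (hpx : p ≠ x) (hpy : p ≠ y) (hqx : q ≠ x) (hqy : q ≠ y)
    (h1 : (p, x) ∈ A ∨ (x, p) ∈ A) (h2 : (p, y) ∈ A ∨ (y, p) ∈ A)
    (h3 : (x, q) ∈ A ∨ (q, x) ∈ A) (h4 : (y, q) ∈ A ∨ (q, y) ∈ A) :
    ∃ B, ARmem A B ∧ ¬ IsForestArcs (transRed (reorient A B)) := by
  classical
  set g : V → ℕ := fun v => ((Fintype.equivFin V) v : ℕ) with hg
  have hginj : Function.Injective g := by
    intro a b hab
    exact (Fintype.equivFin V).injective (Fin.ext hab)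
  set f : V → ℕ := fun v =>
    if v = p then 0 else if v = x then 1 else if v = y then 2 else if v = q then 3
    else 4 + g v with hf
  have hfp : f p = 0 := by simp [hf]
  have hfx : f x = 1 := by simp [hf, hpx.symm]
  have hfy : f y = 2 := by simp [hf, hpy.symm, hxy.symm]
  have hfq : f q = 3 := by simp [hf, hpq.symm, hqx, hqy]
  have hfout : ∀ v, v ≠ p → v ≠ x → v ≠ y → v ≠ q → f v = 4 + g v := by
    intro v h1 h2 h3 h4; simp [hf, h1, h2, h3, h4]
  have hfinj : Function.Injective f := by
    intro a b hab
    by_cases ha1 : a = p <;> by_cases ha2 : a = x <;> by_cases ha3 : a = y <;>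
      by_cases ha4 : a = q <;> by_cases hb1 : b = p <;> by_cases hb2 : b = x <;>
      by_cases hb3 : b = y <;> by_cases hb4 : b = q <;>
      subst_vars <;> simp_all [hf] <;>
      first | rfl | (exact hginj (by omega)) | (exfalso; omega)
  set E := reorient A (orientB A f) with hE
  have hmem : ∀ u v : V, (u, v) ∈ E ↔ ((u, v) ∈ A ∨ (v, u) ∈ A) ∧ f u < f v :=
    fun u v => mem_reorient_orientB hA hfinj
  have htg : ∀ u v : V, Relation.TransGen (ArcRel E) u v → f u < f v :=
    fun u v h => transGen_orientB_lt hA hfinj h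
  -- the four arcs
  have hsym : ∀ u v : V, ((u, v) ∈ A ∨ (v, u) ∈ A) → ((v, u) ∈ A ∨ (u, v) ∈ A) :=
    fun u v h => h.symm
  have hEpx : (p, x) ∈ E := (hmem p x).mpr ⟨h1, by omega⟩
  have hEpy : (p, y) ∈ E := (hmem p y).mpr ⟨h2, by omega⟩
  have hExq : (x, q) ∈ E := (hmem x q).mpr ⟨h3, by omega⟩
  have hEyq : (y, q) ∈ E := (hmem y q).mpr ⟨h4, by omega⟩
  -- membership in transitive reduction
  have htr_px : (p, x) ∈ transRed E := by
    refine ⟨hEpx, ?_⟩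
    rintro ⟨w, hw1, hw2⟩
    have l1 : f p < f w := ((hmem p w).mp hw1).2
    have l2 : f w < f x := htg w x hw2
    omega
  have htr_py : (p, y) ∈ transRed E := by
    refine ⟨hEpy, ?_⟩
    rintro ⟨w, hw1, hw2⟩
    have l1 : f p < f w := ((hmem p w).mp hw1).2
    have l2 : f w < f y := htg w y hw2
    have hwx : w = x := hfinj (by omega : f w = f x)
    rw [hwx] at hw2
    -- TransGen from x to y
    cases hw2 with
    | single h => exact hnadj ((hmem x y).mp h).1
    | tail h1 h2 =>
        rename_i z
        have l3 : f x < f z := htg x z h1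
        have l4 : f z < f y := ((hmem z y).mp h2).2
        omega
  have htr_xq : (x, q) ∈ transRed E := by
    refine ⟨hExq, ?_⟩
    rintro ⟨w, hw1, hw2⟩
    have l1 : f x < f w := ((hmem x w).mp hw1).2
    have l2 : f w < f q := htg w q hw2
    have hwy : w = y := hfinj (by omega : f w = f y)
    rw [hwy] at hw1
    exact hnadj ((hmem x y).mp hw1).1
  have htr_yq : (y, q) ∈ transRed E := by
    refine ⟨hEyq, ?_⟩
    rintro ⟨w, hw1, hw2⟩
    have l1 : f y < f w := ((hmem y w).mp hw1).2
    have l2 : f w < f q := htg w q hw2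
    omega
  set G2 := undirectedGraph (transRed E) with hG2
  have hApx : G2.Adj p x := undirectedGraph_adj.mpr ⟨hpx, Or.inl htr_px⟩
  have hAxq : G2.Adj x q := undirectedGraph_adj.mpr ⟨hqx.symm, Or.inl htr_xq⟩
  have hAqy : G2.Adj q y := undirectedGraph_adj.mpr ⟨hqy, Or.inr htr_yq⟩
  have hAyp : G2.Adj y p := undirectedGraph_adj.mpr ⟨hpy.symm, Or.inr htr_py⟩
  set W : G2.Walk p p :=
    Walk.cons hApx (Walk.cons hAxq (Walk.cons hAqy (Walk.cons hAyp Walk.nil))) with hW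
  have hWcyc : W.IsCycle := by
    rw [hW, Walk.cons_isCycle_iff]
    constructor
    · rw [Walk.isPath_def]
      simp [hqx.symm, hxy, hqy, hpx.symm, hpq.symm, hpy.symm]
    · simp [hpq, hpy, hxy, hqx.symm, hpx]
  refine ⟨orientB A f, ARmem_orientB hA hfinj, ?_⟩
  intro hforest
  exact hforest W hWcyc

end CaseA

section CaseB
variable {V : Type*} [Fintype V]

lemma caseB {A : Set (V × V)} (hA : IsDAG A) {v : V} (c : (undirectedGraph A).Walk v v)
    (hc : c.IsCycle)
    (hchordless : ∀ x y, x ∈ c.support → y ∈ c.support → (undirectedGraph A).Adj x y →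
       s(x, y) ∈ c.edges)
    (hk : 4 ≤ c.length) :
    ∃ B, ARmem A B ∧ ¬ IsForestArcs (transRed (reorient A B)) := by
  classical
  set k := c.length with hkdef
  set g : V → ℕ := fun z => ((Fintype.equivFin V) z : ℕ) with hgdef
  have hginj : Function.Injective g := fun a b hab => (Fintype.equivFin V).injective (Fin.ext hab)
  set ord : ℕ → ℕ := fun i => if i = 0 then 0 else if i = 1 then 1 else k + 1 - i with hord
  have hord_lt : ∀ i, i < k → ord i < k := by
    intro i hi; simp only [hord]; split_ifs <;> omega
  have hord_inj : ∀ i j, i < k → j < k → ord i = ord j → i = j := by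
    intro i j hi hj h; simp only [hord] at h; split_ifs at h <;> omega
  have hinj := cycle_getVert_inj hc
  set P : V → Prop := fun z => ∃ i, i < k ∧ c.getVert i = z with hPdef
  set f : V → ℕ := fun z => if h : P z then ord (Nat.find h) else k + g z with hf
  have hfvert : ∀ i, i < k → f (c.getVert i) = ord i := by
    intro i hi
    have hPi : P (c.getVert i) := ⟨i, hi, rfl⟩
    simp only [hf]
    rw [dif_pos hPi]
    congr 1
    have h1 := Nat.find_spec hPi
    exact hinj _ _ h1.1 hi h1.2
  have hfout : ∀ z, ¬ P z → f z = k + g z := by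
    intro z hz; simp only [hf]; rw [dif_neg hz]
  have hflt : ∀ z, f z < k → ∃ i, i < k ∧ c.getVert i = z ∧ f z = ord i := by
    intro z hz
    by_cases hPz : P z
    · obtain ⟨i, hi, hgi⟩ := hPz
      refine ⟨i, hi, hgi, ?_⟩
      rw [← hgi, hfvert i hi]
    · rw [hfout z hPz] at hz; omega
  have hfinj : Function.Injective f := by
    intro a b hab
    by_cases hPa : P a <;> by_cases hPb : P b
    · obtain ⟨i, hi, rfl⟩ := hPa; obtain ⟨j, hj, rfl⟩ := hPb
      rw [hfvert i hi, hfvert j hj] at hab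
      exact congrArg c.getVert (hord_inj i j hi hj hab)
    · obtain ⟨i, hi, rfl⟩ := hPa
      rw [hfvert i hi, hfout b hPb] at hab
      have := hord_lt i hi; omega
    · obtain ⟨j, hj, rfl⟩ := hPb
      rw [hfvert j hj, hfout a hPa] at hab
      have := hord_lt j hj; omega
    · rw [hfout a hPa, hfout b hPb] at hab
      exact hginj (by omega)
  -- numeric values
  have fv0 : f (c.getVert 0) = 0 := by rw [hfvert 0 (by omega)]; simp [hord]
  have fv1 : f (c.getVert 1) = 1 := by rw [hfvert 1 (by omega)]; simp [hord]
  have fvi : ∀ i, 2 ≤ i → i < k → f (c.getVert i) = k + 1 - i := by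
    intro i h2 hik
    rw [hfvert i hik]
    simp only [hord]
    split_ifs <;> omega
  set E := reorient A (orientB A f) with hE
  have hmem : ∀ u w : V, (u, w) ∈ E ↔ ((u, w) ∈ A ∨ (w, u) ∈ A) ∧ f u < f w :=
    fun u w => mem_reorient_orientB hA hfinj
  have htg : ∀ u w : V, Relation.TransGen (ArcRel E) u w → f u < f w :=
    fun u w h => transGen_orientB_lt hA hfinj h
  have hsupp : ∀ i, i ≤ k → c.getVert i ∈ c.support := fun i hi =>
    Walk.mem_support_iff_exists_getVert.mpr ⟨i, rfl, hi⟩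
  have hgk : c.getVert k = c.getVert 0 := by
    rw [hkdef, Walk.getVert_length, Walk.getVert_zero]
  have chord : ∀ i j, i < k → j < k →
      (undirectedGraph A).Adj (c.getVert i) (c.getVert j) →
      (j = i + 1 ∨ i = j + 1 ∨ (i = 0 ∧ j = k - 1) ∨ (j = 0 ∧ i = k - 1)) := by
    intro i j hi hj hadj'
    have hedge := hchordless _ _ (hsupp i (by omega)) (hsupp j (by omega)) hadj'
    rw [mem_edges_iff_getVert] at hedge
    obtain ⟨m, hm, hse⟩ := hedge
    rw [Sym2.eq_iff] at hse
    by_cases hm1 : m + 1 < k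
    · rcases hse with ⟨e1, e2⟩ | ⟨e1, e2⟩
      · have := hinj i m hi hm e1
        have := hinj j (m + 1) hj hm1 e2
        omega
      · have := hinj i (m + 1) hi hm1 e1
        have := hinj j m hj hm e2
        omega
    · have hmk : m + 1 = k := by omega
      rw [hmk, hgk] at hse
      rcases hse with ⟨e1, e2⟩ | ⟨e1, e2⟩
      · have := hinj i m hi hm e1
        have := hinj j 0 hj (by omega) e2
        omega
      · have := hinj i 0 hi (by omega) e1
        have := hinj j m hj hm e2
        omega
  -- arcs of the oriented cycle are in the transitive reduction
  have hadjA : ∀ i, i < k → ((c.getVert i, c.getVert (i+1)) ∈ A ∨ (c.getVert (i+1), c.getVert i) ∈ A) := by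
    intro i hi
    exact (undirectedGraph_adj.mp (c.adj_getVert_succ hi)).2
  have fv2 : f (c.getVert 2) = k - 1 := by rw [fvi 2 (by omega) (by omega)]; omega
  have fvlast : f (c.getVert (k-1)) = 2 := by rw [fvi (k-1) (by omega) (by omega)]; omega
  have arc0 : (c.getVert 0, c.getVert 1) ∈ transRed E := by
    refine ⟨(hmem _ _).mpr ⟨hadjA 0 (by omega), by omega⟩, ?_⟩
    rintro ⟨w, hw1, hw2⟩
    have l1 : f (c.getVert 0) < f w := ((hmem _ _).mp hw1).2
    have l2 : f w < f (c.getVert 1) := htg _ _ hw2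
    omega
  have arc1 : (c.getVert 1, c.getVert 2) ∈ transRed E := by
    refine ⟨(hmem _ _).mpr ⟨hadjA 1 (by omega), by omega⟩, ?_⟩
    rintro ⟨w, hw1, hw2⟩
    have l1 : f (c.getVert 1) < f w := ((hmem _ _).mp hw1).2
    have l2 : f w < f (c.getVert 2) := htg _ _ hw2
    obtain ⟨i, hik, hgi, hfw⟩ := hflt w (by omega)
    have hne : c.getVert 1 ≠ w := by
      intro h; rw [← h] at l1; omega
    have hadj' : (undirectedGraph A).Adj (c.getVert 1) (c.getVert i) := by
      rw [hgi]
      exact undirectedGraph_adj.mpr ⟨hne, ((hmem _ _).mp hw1).1⟩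
    have hch := chord 1 i (by omega) hik hadj'
    have hordi : 2 ≤ i → ord i = k + 1 - i := by intro h; simp only [hord]; split_ifs <;> omega
    -- from 1 < f w < k - 1 deduce i ≥ 3
    have : i ≠ 0 := by rintro rfl; simp [hord] at hfw; omega
    have : i ≠ 1 := by rintro rfl; simp [hord] at hfw; omega
    have h2i : 2 ≤ i := by omega
    rw [hordi h2i] at hfw
    omega
  have arcmid : ∀ i, 2 ≤ i → i ≤ k - 2 → (c.getVert (i+1), c.getVert i) ∈ transRed E := by
    intro i h2 hik
    have e1 : f (c.getVert (i+1)) = k - i := by rw [fvi (i+1) (by omega) (by omega)]; omega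
    have e2 : f (c.getVert i) = k + 1 - i := by rw [fvi i (by omega) (by omega)]
    refine ⟨(hmem _ _).mpr ⟨(hadjA i (by omega)).symm, by omega⟩, ?_⟩
    rintro ⟨w, hw1, hw2⟩
    have l1 : f (c.getVert (i+1)) < f w := ((hmem _ _).mp hw1).2
    have l2 : f w < f (c.getVert i) := htg _ _ hw2
    omega
  have arclast : (c.getVert 0, c.getVert (k-1)) ∈ transRed E := by
    have hor : ((c.getVert 0, c.getVert (k-1)) ∈ A ∨ (c.getVert (k-1), c.getVert 0) ∈ A) := by
      have := hadjA (k-1) (by omega)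
      rw [show k - 1 + 1 = k by omega, hgk] at this
      exact this.symm
    refine ⟨(hmem _ _).mpr ⟨hor, by omega⟩, ?_⟩
    rintro ⟨w, hw1, hw2⟩
    have l1 : f (c.getVert 0) < f w := ((hmem _ _).mp hw1).2
    have l2 : f w < f (c.getVert (k-1)) := htg _ _ hw2
    have hw1' : w = c.getVert 1 := hfinj (by omega : f w = f (c.getVert 1))
    rw [hw1'] at hw2
    cases hw2 with
    | single h =>
        have hne : c.getVert 1 ≠ c.getVert (k-1) := by
          intro hh
          have := hinj 1 (k-1) (by omega) (by omega) hh
          omega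
        have hadj' : (undirectedGraph A).Adj (c.getVert 1) (c.getVert (k-1)) :=
          undirectedGraph_adj.mpr ⟨hne, ((hmem _ _).mp h).1⟩
        have hch := chord 1 (k-1) (by omega) (by omega) hadj'
        omega
    | tail h1 h2 =>
        rename_i z
        have l3 : f (c.getVert 1) < f z := htg _ _ h1
        have l4 : f z < f (c.getVert (k-1)) := ((hmem _ _).mp h2).2
        omega
  -- every edge of c is an edge of the transitive reduction's undirected graph
  have hedges : ∀ e ∈ c.edges, e ∈ (undirectedGraph (transRed E)).edgeSet := by
    intro e he
    rw [mem_edges_iff_getVert] at he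
    obtain ⟨m, hm, rfl⟩ := he
    rw [SimpleGraph.mem_edgeSet, undirectedGraph_adj]
    by_cases hm1 : m + 1 < k
    · refine ⟨fun hh => by have := hinj m (m+1) hm hm1 hh; omega, ?_⟩
      rcases Nat.lt_or_ge m 2 with hm2 | hm2
      · interval_cases m
        · exact Or.inl arc0
        · exact Or.inl arc1
      · exact Or.inr (arcmid m hm2 (by omega))
    · have hmk : m = k - 1 := by omega
      subst hmk
      rw [show k - 1 + 1 = k by omega, hgk]
      refine ⟨fun hh => by have := hinj (k-1) 0 (by omega) (by omega) hh; omega, ?_⟩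
      exact Or.inr arclast
  refine ⟨orientB A f, ARmem_orientB hA hfinj, ?_⟩
  intro hforest
  exact hforest (c.transfer _ hedges) (isCycle_transfer hc hedges)

end CaseB

section Easy
variable {V : Type*} [Fintype V]

lemma exists_potential {E : Set (V × V)} (hE : AcyclicArcs E) :
    ∃ F : V → ℕ, ∀ u w : V, (u, w) ∈ E → F u < F w := by
  classical
  refine ⟨fun z => (Finset.univ.filter (fun u => Relation.TransGen (ArcRel E) u z)).card, ?_⟩
  intro u w huw
  apply Finset.card_lt_card
  rw [Finset.ssubset_iff_of_subset]
  · refine ⟨u, ?_, ?_⟩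
    · simp only [Finset.mem_filter, Finset.mem_univ, true_and]
      exact Relation.TransGen.single huw
    · simp only [Finset.mem_filter, Finset.mem_univ, true_and]
      exact hE u
  · intro x hx
    simp only [Finset.mem_filter, Finset.mem_univ, true_and] at hx ⊢
    exact hx.tail huw

lemma easy_dir {A : Set (V × V)} (hA : IsDAG A) (hch : Chordful A) :
    ∀ B, ARmem A B → IsForestArcs (transRed (reorient A B)) := by
  classical
  intro B hB
  set E := reorient A B with hE
  intro v c hcyc
  obtain ⟨F, hF⟩ := exists_potential hB.2
  have hsubE : ∀ x y : V, (x, y) ∈ transRed E → ((x, y) ∈ A ∨ (y, x) ∈ A) :=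
    fun x y h => reorient_subset_undAdj hB.1 h.1
  have hedges : ∀ e ∈ c.edges, e ∈ (undirectedGraph A).edgeSet := by
    intro e he
    induction e with
    | _ x y =>
      have hadj := c.adj_of_mem_edges he
      rw [SimpleGraph.mem_edgeSet, undirectedGraph_adj]
      obtain ⟨hne, htr⟩ := undirectedGraph_adj.mp hadj
      refine ⟨hne, ?_⟩
      rcases htr with h | h
      · exact hsubE x y h
      · exact (hsubE y x h).symm
  have hcycA := isCycle_transfer hcyc hedges
  have hsuppA : (c.transfer _ hedges).support = c.support := Walk.support_transfer _ _
  have hclique := hch v (c.transfer _ hedges) hcycA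
  obtain ⟨m, hmS', hmax⟩ := Finset.exists_max_image (c.support.toFinset) F ⟨v, by simp⟩
  rw [List.mem_toFinset] at hmS'
  have hmax' : ∀ z ∈ c.support, F z ≤ F m := fun z hz => hmax z (List.mem_toFinset.mpr hz)
  set c2 := c.rotate m hmS' with hc2
  have hcyc2 : c2.IsCycle := hcyc.rotate hmS'
  have hnotnil : ¬ c2.Nil := by
    rw [Walk.not_nil_iff_lt_length]
    have := hcyc2.three_le_length; omega
  obtain ⟨a, ha, w, hweq⟩ := Walk.not_nil_iff.mp hnotnil
  have hsupp2 : ∀ z ∈ c2.support, z ∈ c.support := by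
    intro z hz
    rw [c2.support_eq_cons] at hz
    rcases List.mem_cons.mp hz with rfl | hz'
    · exact hmS'
    · have hperm := c.support_rotate m hmS'
      have : z ∈ c.support.tail := (hperm.mem_iff).mp hz'
      rw [c.support_eq_cons]
      exact List.mem_cons_of_mem _ this
  have hwa : ¬ w.Nil := Walk.not_nil_of_ne (ha.ne.symm)
  obtain ⟨b, hbm, hbedge, hbsupp⟩ := exists_penult w hwa
  have hc2supp : c2.support = m :: w.support := by rw [hweq, Walk.support_cons]
  have haS : a ∈ c.support := hsupp2 a (by rw [hc2supp]; exact List.mem_cons_of_mem _ w.start_mem_support)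
  have hbS : b ∈ c.support := hsupp2 b (by rw [hc2supp]; exact List.mem_cons_of_mem _ hbsupp)
  have hab : a ≠ b := by
    intro h
    have hnodup := hcyc2.isCircuit.isTrail.edges_nodup
    rw [hweq, Walk.edges_cons] at hnodup
    have hni : s(m, a) ∉ w.edges := (List.nodup_cons.mp hnodup).1
    subst h
    exact hni (by simpa [Sym2.eq_swap] using hbedge)
  have ham' : (a, m) ∈ transRed E := by
    rcases (undirectedGraph_adj.mp ha).2 with h | h
    · exfalso
      have h1 : F m < F a := hF _ _ h.1
      have h2 := hmax' a haS
      omega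
    · exact h
  have hbm' : (b, m) ∈ transRed E := by
    rcases (undirectedGraph_adj.mp hbm).2 with h | h
    · exact h
    · exfalso
      have h1 : F m < F b := hF _ _ h.1
      have h2 := hmax' b hbS
      omega
  have hclq : (a, b) ∈ A ∨ (b, a) ∈ A :=
    hclique a (by rw [hsuppA]; exact haS) b (by rw [hsuppA]; exact hbS) hab
  have hEor : (a, b) ∈ E ∨ (b, a) ∈ E := by
    rcases hclq with h | h
    · exact mem_reorient_of_mem h
    · exact (mem_reorient_of_mem h).symm
  rcases hEor with h | h
  · exact ham'.2 ⟨b, h, Relation.TransGen.single hbm'.1⟩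
  · exact hbm'.2 ⟨a, h, Relation.TransGen.single ham'.1⟩

end Easy

section Hard
variable {V : Type*} [Fintype V]

/-- membership in support vs tail of support for closed nontrivial walks -/
lemma mem_support_iff_mem_tail {G : SimpleGraph V} {u' : V} (d : G.Walk u' u') (hd : ¬ d.Nil) :
    ∀ z, z ∈ d.support ↔ z ∈ d.support.tail := by
  intro z
  constructor
  · intro hz
    rw [d.support_eq_cons] at hz
    rcases List.mem_cons.mp hz with rfl | h
    · have hlen : 0 < d.length := Walk.not_nil_iff_lt_length.mp hd
      rw [walk_support_eq_map, List.range_succ_eq_map]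
      simp only [List.map_cons, List.tail_cons, List.map_map]
      refine List.mem_map.mpr ⟨d.length - 1, List.mem_range.mpr (by omega), ?_⟩
      show d.getVert (Nat.succ (d.length - 1)) = z
      rw [show Nat.succ (d.length - 1) = d.length by omega, Walk.getVert_length]
    · exact h
  · intro hz
    rw [d.support_eq_cons]
    exact List.mem_cons_of_mem _ hz

lemma hard_dir {A : Set (V × V)} (hA : IsDAG A) (hch : ¬ Chordful A) :
    ∃ B, ARmem A B ∧ ¬ IsForestArcs (transRed (reorient A B)) := by
  classical
  have hex : ∃ n : ℕ, ∃ (v : V) (c : (undirectedGraph A).Walk v v), c.IsCycle ∧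
      c.length = n ∧ ∃ x ∈ c.support, ∃ y ∈ c.support, x ≠ y ∧
      ¬ ((x, y) ∈ A ∨ (y, x) ∈ A) := by
    rw [Chordful] at hch
    push_neg at hch
    obtain ⟨v, c, hc, x, hx, y, hy, hxy, h1⟩ := hch
    exact ⟨c.length, v, c, hc, rfl, x, hx, y, hy, hxy, by tauto⟩
  obtain ⟨v, c, hc, hlen, x, hx, y, hy, hxy, hnadj⟩ := Nat.find_spec hex
  have hmin : ∀ (v' : V) (c' : (undirectedGraph A).Walk v' v'), c'.IsCycle →
      c'.length < c.length →
      ∀ x' ∈ c'.support, ∀ y' ∈ c'.support, x' ≠ y' →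
      ((x', y') ∈ A ∨ (y', x') ∈ A) := by
    intro v' c' hc' hlt x' hx' y' hy' hne
    by_contra hno
    have hlt' : c'.length < Nat.find hex := by omega
    exact Nat.find_min hex hlt' ⟨v', c', hc', rfl, x', hx', y', hy', hne, hno⟩
  clear hlen
  by_cases hcl : ∀ a b, a ∈ c.support → b ∈ c.support → (undirectedGraph A).Adj a b →
      s(a, b) ∈ c.edges
  · -- chordless case
    have hk3 := hc.three_le_length
    have hadjor : ∀ i, i < c.length →
        ((c.getVert i, c.getVert (i+1)) ∈ A ∨ (c.getVert (i+1), c.getVert i) ∈ A) :=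
      fun i hi => (undirectedGraph_adj.mp (c.adj_getVert_succ hi)).2
    have hk : 4 ≤ c.length := by
      by_contra h4
      have hklen : c.length = 3 := by omega
      obtain ⟨i, hgi, hik⟩ := Walk.mem_support_iff_exists_getVert.mp hx
      obtain ⟨j, hgj, hjk⟩ := Walk.mem_support_iff_exists_getVert.mp hy
      rw [hklen] at hik hjk
      have hg30 : c.getVert 3 = c.getVert 0 := by
        rw [← hklen, Walk.getVert_length, Walk.getVert_zero]
      set i' := if i = 3 then 0 else i with hi'def
      set j' := if j = 3 then 0 else j with hj'def
      have hgi' : c.getVert i' = x := by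
        rw [hi'def]; split_ifs with h
        · rw [← hg30, ← h]; exact hgi
        · exact hgi
      have hgj' : c.getVert j' = y := by
        rw [hj'def]; split_ifs with h
        · rw [← hg30, ← h]; exact hgj
        · exact hgj
      have hi'3 : i' < 3 := by rw [hi'def]; split_ifs <;> omega
      have hj'3 : j' < 3 := by rw [hj'def]; split_ifs <;> omega
      have h01 := hadjor 0 (by omega)
      have h12 := hadjor 1 (by omega)
      have h20 : ((c.getVert 2, c.getVert 0) ∈ A ∨ (c.getVert 0, c.getVert 2) ∈ A) := by
        have := hadjor 2 (by omega)
        rwa [show (2:ℕ)+1 = 3 from rfl, hg30] at this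
      rw [← hgi'] at hxy hnadj
      rw [← hgj'] at hxy hnadj
      clear hgi' hgj' hgi hgj hi'def hj'def
      interval_cases i' <;> interval_cases j' <;>
        first
          | exact hxy rfl
          | exact hnadj h01
          | exact hnadj h01.symm
          | exact hnadj h12
          | exact hnadj h12.symm
          | exact hnadj h20
          | exact hnadj h20.symm
    exact caseB hA c hc hcl hk
  · push_neg at hcl
    obtain ⟨p, q, hpS, hqS, hpq_adj, hchord⟩ := hcl
    have hpq : p ≠ q := hpq_adj.ne
    set c2 := c.rotate p hpS with hc2def
    have hcyc2 : c2.IsCycle := hc.rotate hpS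
    have hrot := c.rotate_edges p hpS
    have hlen2 : c2.length = c.length := by
      have h := hrot.perm.length_eq
      rwa [Walk.length_edges, Walk.length_edges] at h
    have hnotnil2 : ¬ c2.Nil := by
      rw [Walk.not_nil_iff_lt_length]
      have := hcyc2.three_le_length; omega
    have hnotnilc : ¬ c.Nil := by
      rw [Walk.not_nil_iff_lt_length]
      have := hc.three_le_length; omega
    have hsupp_iff : ∀ z, z ∈ c2.support ↔ z ∈ c.support := by
      intro z
      rw [mem_support_iff_mem_tail c2 hnotnil2, mem_support_iff_mem_tail c hnotnilc]
      exact (c.support_rotate p hpS).perm.mem_iff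
    have hq2 : q ∈ c2.support := (hsupp_iff q).mpr hqS
    obtain ⟨u, hu, w, hweq⟩ := Walk.not_nil_iff.mp hnotnil2
    have hwnodup : w.support.Nodup := by
      have h := hcyc2.support_nodup
      rw [hweq, Walk.support_cons] at h
      simpa using h
    have hwpath : w.IsPath := (Walk.isPath_def w).mpr hwnodup
    have hqw : q ∈ w.support := by
      have := hq2
      rw [hweq, Walk.support_cons] at this
      rcases List.mem_cons.mp this with h | h
      · exact absurd h.symm hpq
      · exact h
    have hwedges : w.edges ⊆ c.edges := by
      intro e he
      have : e ∈ c2.edges := by rw [hweq, Walk.edges_cons]; exact List.mem_cons_of_mem _ he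
      exact hrot.perm.mem_iff.mp this
    set t1 := w.takeUntil q hqw with ht1def
    set t2 := w.dropUntil q hqw with ht2def
    have ht1path : t1.IsPath := hwpath.takeUntil hqw
    have ht2path : t2.IsPath := hwpath.dropUntil hqw
    have hspec : t1.append t2 = w := w.take_spec hqw
    have hsupps : t1.support ++ t2.support.tail = w.support := by
      rw [← Walk.support_append, hspec]
    have ht1edges : t1.edges ⊆ c.edges := fun e he =>
      hwedges (w.edges_takeUntil_subset hqw he)
    have ht2edges : t2.edges ⊆ c.edges := fun e he =>
      hwedges (w.edges_dropUntil_subset hqw he)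
    have hqu : q ≠ u := by
      rintro rfl
      apply hchord
      apply hrot.perm.mem_iff.mp
      show s(p, q) ∈ c2.edges
      rw [hweq, Walk.edges_cons]
      exact List.mem_cons_self
    have hpt1 : p ∉ t1.support := by
      intro hp1
      have hp2 : p ∈ t2.support := t2.end_mem_support
      rw [t2.support_eq_cons] at hp2
      rcases List.mem_cons.mp hp2 with h | h
      · exact hpq h
      · have hnd := hwnodup
        rw [← hsupps, List.nodup_append] at hnd
        exact hnd.2.2 _ hp1 _ h rfl
    -- the two sub-cycles
    set C2 : (undirectedGraph A).Walk p p := Walk.cons hpq_adj t2 with hC2def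
    have hC2cyc : C2.IsCycle := by
      rw [hC2def, Walk.cons_isCycle_iff]
      refine ⟨ht2path, fun hin => hchord (ht2edges hin)⟩
    have hC1path : (Walk.cons hu t1).IsPath := by
      rw [Walk.isPath_def, Walk.support_cons]
      rw [List.nodup_cons]
      exact ⟨hpt1, (Walk.isPath_def t1).mp ht1path⟩
    set C1 : (undirectedGraph A).Walk q q := Walk.cons hpq_adj.symm (Walk.cons hu t1) with hC1def
    have hC1cyc : C1.IsCycle := by
      rw [hC1def, Walk.cons_isCycle_iff]
      refine ⟨hC1path, ?_⟩
      rw [Walk.edges_cons]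
      intro hin
      rcases List.mem_cons.mp hin with h | h
      · rw [Sym2.eq_iff] at h
        rcases h with ⟨h1, _⟩ | ⟨h1, _⟩
        · exact hpq h1.symm
        · exact hqu h1
      · apply hchord
        have := ht1edges h
        rwa [Sym2.eq_swap] at this
    -- lengths
    have hlensum : t1.length + t2.length = w.length := by
      have := congrArg Walk.length hspec
      rwa [Walk.length_append] at this
    have hclen : c.length = w.length + 1 := by
      rw [← hlen2, hweq, Walk.length_cons]
    have ht1pos : 1 ≤ t1.length := by
      by_contra h0
      exact hqu (Walk.eq_of_length_eq_zero (p := t1) (by omega)).symm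
    have ht2ge2 : 2 ≤ t2.length := by
      have ht2pos : 1 ≤ t2.length := by
        by_contra h0
        exact hpq (Walk.eq_of_length_eq_zero (p := t2) (by omega)).symm
      by_contra h1
      have ht2len : t2.length = 1 := by omega
      apply hchord
      apply ht2edges
      rw [mem_edges_iff_getVert]
      refine ⟨0, by omega, ?_⟩
      rw [Walk.getVert_zero, show (0:ℕ)+1 = t2.length by omega, Walk.getVert_length]
      exact Sym2.eq_swap
    have hC1len : C1.length < c.length := by
      rw [hC1def, Walk.length_cons, Walk.length_cons]; omega
    have hC2len : C2.length < c.length := by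
      rw [hC2def, Walk.length_cons]; omega
    have clique1 := hmin q C1 hC1cyc hC1len
    have clique2 := hmin p C2 hC2cyc hC2len
    -- support membership facts
    have hC1supp : C1.support = q :: p :: t1.support := by
      rw [hC1def, Walk.support_cons, Walk.support_cons]
    have hC2supp : C2.support = p :: t2.support := by
      rw [hC2def, Walk.support_cons]
    have hpC1 : p ∈ C1.support := by rw [hC1supp]; simp
    have hqC1 : q ∈ C1.support := by rw [hC1supp]; simp
    have hpC2 : p ∈ C2.support := by rw [hC2supp]; simp
    have hqC2 : q ∈ C2.support := by
      rw [hC2supp]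
      exact List.mem_cons_of_mem _ t2.start_mem_support
    have hsplit : ∀ z, z ∈ c.support → z ∈ C1.support ∨ z ∈ C2.support := by
      intro z hz
      have hz2 : z ∈ c2.support := (hsupp_iff z).mpr hz
      rw [hweq, Walk.support_cons] at hz2
      rcases List.mem_cons.mp hz2 with rfl | hzw
      · exact Or.inl hpC1
      · rw [← hsupps] at hzw
        rcases List.mem_append.mp hzw with h | h
        · left; rw [hC1supp]; exact List.mem_cons_of_mem _ (List.mem_cons_of_mem _ h)
        · right; rw [hC2supp]
          exact List.mem_cons_of_mem _ (List.mem_of_mem_tail h)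
    have main : ∀ x' y', x' ≠ y' → ¬ ((x', y') ∈ A ∨ (y', x') ∈ A) →
        x' ∈ C1.support → y' ∈ C2.support → x' ∉ C2.support → y' ∉ C1.support →
        ∃ B, ARmem A B ∧ ¬ IsForestArcs (transRed (reorient A B)) := by
      intro x' y' hne hnadj' hx1 hy2 hx2 hy1
      have hpx' : p ≠ x' := fun h => hx2 (h ▸ hpC2)
      have hqx' : q ≠ x' := fun h => hx2 (h ▸ hqC2)
      have hpy' : p ≠ y' := fun h => hy1 (h ▸ hpC1)
      have hqy' : q ≠ y' := fun h => hy1 (h ▸ hqC1)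
      exact caseA hA p x' y' q hne hnadj' hpq hpx' hpy' hqx' hqy'
        (clique1 p hpC1 x' hx1 hpx')
        (clique2 p hpC2 y' hy2 hpy')
        (clique1 x' hx1 q hqC1 (fun h => hqx' h.symm))
        (clique2 y' hy2 q hqC2 (fun h => hqy' h.symm))
    rcases hsplit x hx with hxC1 | hxC2
    · by_cases hyC1 : y ∈ C1.support
      · exact absurd (clique1 x hxC1 y hyC1 hxy) hnadj
      · have hyC2 : y ∈ C2.support := (hsplit y hy).resolve_left hyC1
        by_cases hxC2 : x ∈ C2.support
        · exact absurd (clique2 x hxC2 y hyC2 hxy) hnadj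
        · exact main x y hxy hnadj hxC1 hyC2 hxC2 hyC1
    · by_cases hyC2 : y ∈ C2.support
      · exact absurd (clique2 x hxC2 y hyC2 hxy) hnadj
      · have hyC1 : y ∈ C1.support := (hsplit y hy).resolve_right hyC2
        by_cases hxC1 : x ∈ C1.support
        · exact absurd (clique1 x hxC1 y hyC1 hxy) hnadj
        · exact main y x hxy.symm (fun h => hnadj h.symm) hyC1 hxC2 hyC2 hxC1

end Hard

/-- The transitive reduction of every acyclic reorientation of
`D` is a forest if and only if `D` is chordful. -/
theorem stmt_19 {V : Type*} [Fintype V] (A : Set (V × V)) (hA : IsDAG A) :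
    (∀ B, ARmem A B → IsForestArcs (transRed (reorient A B))) ↔ Chordful A := by
  constructor
  · intro h
    by_contra hch
    obtain ⟨B, hB, hnf⟩ := hard_dir hA hch
    exact hnf (h B hB)
  · intro hch B hB
    exact easy_dir hA hch B hB
end
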